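/- arXiv:0812.1475 — 6 statements merged into one kernel-verified Lean document; each statement's English description precedes it below -/
import Mathlib

section
/- Let Λ be an artin algebra and T a finite length Λ-module. If ε ∈ Ext^i(M, T') is a universal add(T)-extension of M (i.e., T' ∈ add(T) and the induced map ε*: Hom(T',T) → Ext^i(M,T) is surjective), then there exists a direct sum decomposition T' = I ⊕ J such that ε = ε̄ ⊕ 0 with ε̄ ∈ Ext^i(M, I) a minimal universal add(T)-extension (meaning any θ ∈ End(I) with θ·ε̄ = ε̄ is an automorphism). -/
open CategoryTheory Abelian Limits

attribute [local instance] HasDerivedCategory.standard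

noncomputable instance (Λ : Type) [Ring Λ] : HasExt.{1} (ModuleCat.{0} Λ) :=
  hasExt_of_hasDerivedCategory _

/-- `X` is a direct summand of `M` in `ModuleCat Λ`. -/
def CatSummand {Λ : Type} [Ring Λ] (X M : ModuleCat.{0} Λ) : Prop :=
  ∃ (i : X ⟶ M) (p : M ⟶ X), i ≫ p = 𝟙 X

/-- `X` belongs to `add T`: it is a direct summand of a finite direct sum of
copies of `T`. -/
def CatInAdd {Λ : Type} [Ring Λ] (T X : ModuleCat.{0} Λ) : Prop :=
  ∃ k : ℕ, CatSummand X (ModuleCat.of Λ (Fin k → T))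

section Helpers

variable {Λ : Type} [Ring Λ]

lemma catSummand_trans {X Y Z : ModuleCat.{0} Λ} (h1 : CatSummand X Y)
    (h2 : CatSummand Y Z) : CatSummand X Z := by
  obtain ⟨i1, p1, h1⟩ := h1
  obtain ⟨i2, p2, h2⟩ := h2
  exact ⟨i1 ≫ i2, p2 ≫ p1, by
    rw [Category.assoc, ← Category.assoc i2, h2, Category.id_comp, h1]⟩

lemma ext_comp_split {M A B C : ModuleCat.{0} Λ} {i : ℕ} (ε : Ext M A i)
    (a : A ⟶ B) (b : B ⟶ C) :
    ε.comp (Ext.mk₀ (a ≫ b)) (add_zero i) =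
      (ε.comp (Ext.mk₀ a) (add_zero i)).comp (Ext.mk₀ b) (add_zero i) := by
  rw [← Ext.mk₀_comp_mk₀, Ext.comp_assoc_of_third_deg_zero]

/-- Key auxiliary lemma, proved by well-founded induction on the submodules of
a fixed noetherian and artinian module `W`:  any universal extension with values
in a submodule of `W` can be decomposed into a minimal part and a trivial part. -/
lemma aux_minimal (M T W : ModuleCat.{0} Λ) [IsNoetherian Λ W] [IsArtinian Λ W]
    (i : ℕ) (N : Submodule Λ W) (ε : Ext M (ModuleCat.of Λ ↥N) i)
    (huniv : ∀ x : Ext M T i, ∃ θ : ModuleCat.of Λ ↥N ⟶ T,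
      ε.comp (Ext.mk₀ θ) (add_zero i) = x) :
    ∃ (I J : ModuleCat.{0} Λ) (e : ModuleCat.of Λ ↥N ≅ I ⊞ J),
      CatSummand I (ModuleCat.of Λ ↥N) ∧
      ε.comp (Ext.mk₀ (e.hom ≫ biprod.snd)) (add_zero i) = 0 ∧
      (∀ x : Ext M T i, ∃ θ : I ⟶ T,
        (ε.comp (Ext.mk₀ (e.hom ≫ biprod.fst)) (add_zero i)).comp
          (Ext.mk₀ θ) (add_zero i) = x) ∧
      (∀ θ : I ⟶ I,
        (ε.comp (Ext.mk₀ (e.hom ≫ biprod.fst)) (add_zero i)).comp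
            (Ext.mk₀ θ) (add_zero i)
          = ε.comp (Ext.mk₀ (e.hom ≫ biprod.fst)) (add_zero i) → IsIso θ) := by
  induction N using WellFoundedLT.induction with
  | _ N IH => ?_
  by_cases hmin : ∀ θ : ModuleCat.of Λ ↥N ⟶ ModuleCat.of Λ ↥N,
      ε.comp (Ext.mk₀ θ) (add_zero i) = ε → IsIso θ
  · -- base case: `ε` is already minimal; take `J = 0`.
    have hzero : IsZero (ModuleCat.of Λ PUnit) := ModuleCat.isZero_of_subsingleton _
    obtain ⟨e, hfst, hsnd⟩ : ∃ e : ModuleCat.of Λ ↥N ≅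
        ModuleCat.of Λ ↥N ⊞ ModuleCat.of Λ PUnit,
        e.hom ≫ biprod.fst = 𝟙 _ ∧ e.hom ≫ biprod.snd = 0 := by
      refine ⟨⟨biprod.lift (𝟙 _) 0, biprod.fst, by simp, ?_⟩, by simp, by simp⟩
      apply biprod.hom_ext
      · simp
      · apply hzero.eq_of_tgt
    refine ⟨_, _, e, ⟨𝟙 _, 𝟙 _, Category.id_comp _⟩, ?_, ?_, ?_⟩
    · rw [hsnd, Ext.mk₀_zero, Ext.comp_zero]
    · intro x
      obtain ⟨θ, hθ⟩ := huniv x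
      exact ⟨θ, by rw [hfst, Ext.comp_mk₀_id, hθ]⟩
    · intro θ hθ
      rw [hfst, Ext.comp_mk₀_id] at hθ
      exact hmin θ hθ
  · -- inductive step: there is a non-invertible endomorphism fixing `ε`.
    push_neg at hmin
    obtain ⟨θ, hθε, hθ⟩ := hmin
    set f : Module.End Λ ↥N := θ.hom with hf
    obtain ⟨n, hn1, hcompl⟩ : ∃ n, 1 ≤ n ∧
        IsCompl (LinearMap.ker (f ^ n)) (LinearMap.range (f ^ n)) := by
      obtain ⟨m, hm⟩ := Filter.eventually_atTop.mp f.eventually_isCompl_ker_pow_range_pow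
      exact ⟨max m 1, le_max_right _ _, hm _ (le_max_left _ _)⟩
    -- all powers of `θ` fix `ε`
    have hpow : ∀ m : ℕ, ε.comp (Ext.mk₀ (ModuleCat.ofHom (f ^ m))) (add_zero i) = ε := by
      intro m
      induction m with
      | zero =>
        have : ModuleCat.ofHom (f ^ 0) = 𝟙 _ := by
          rw [pow_zero]; rfl
        rw [this, Ext.comp_mk₀_id]
      | succ m ih =>
        have hstep : ModuleCat.ofHom (f ^ (m+1))
            = θ ≫ ModuleCat.ofHom (f ^ m) := by
          apply ModuleCat.hom_ext
          rw [pow_succ]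
          rfl
        rw [hstep, ext_comp_split, hθε, ih]
    -- the kernel of `f ^ n` is nonzero
    have hq : LinearMap.ker (f ^ n) ≠ ⊥ := by
      intro hbot
      have hker : LinearMap.ker f = ⊥ := by
        rw [eq_bot_iff, ← hbot]
        intro x hx
        have hx' : f x = 0 := hx
        have hfn : f ^ n = f ^ (n - 1) * f := by
          rw [← pow_succ]
          congr 1
          omega
        simp only [LinearMap.mem_ker, hfn, Module.End.mul_apply, hx', map_zero]
      have hinj : Function.Injective f := LinearMap.ker_eq_bot.mp hker
      have hbij : Function.Bijective f :=
        ⟨hinj, IsArtinian.surjective_of_injective_endomorphism f hinj⟩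
      exact hθ ⟨ModuleCat.ofHom (LinearEquiv.ofBijective f hbij).symm.toLinearMap,
        ModuleCat.hom_ext (LinearMap.ext fun x => (LinearEquiv.ofBijective f hbij).symm_apply_apply x),
        ModuleCat.hom_ext (LinearMap.ext fun x => (LinearEquiv.ofBijective f hbij).apply_symm_apply x)⟩
    set G : ModuleCat.of Λ ↥N ⟶ ModuleCat.of Λ ↥N :=
      ModuleCat.ofHom (f ^ n) with hG
    set p : Submodule Λ ↥N := LinearMap.range (f ^ n) with hp
    set q : Submodule Λ ↥N := LinearMap.ker (f ^ n) with hq'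
    have hc : IsCompl p q := hcompl.symm
    -- projections and inclusions
    set πp : ModuleCat.of Λ ↥N ⟶ ModuleCat.of Λ ↥p := ModuleCat.ofHom (p.linearProjOfIsCompl q hc) with hπp
    set πq : ModuleCat.of Λ ↥N ⟶ ModuleCat.of Λ ↥q := ModuleCat.ofHom (q.linearProjOfIsCompl p hc.symm)
      with hπq
    set ιp : ModuleCat.of Λ ↥p ⟶ ModuleCat.of Λ ↥N := ModuleCat.ofHom p.subtype with hιp
    set ιq : ModuleCat.of Λ ↥q ⟶ ModuleCat.of Λ ↥N := ModuleCat.ofHom q.subtype with hιq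
    have hproj1 : ιp ≫ πp = 𝟙 (ModuleCat.of Λ ↥p) :=
      ModuleCat.hom_ext (Submodule.linearProjOfIsCompl_comp_subtype hc)
    have hproj0 : ιp ≫ πq = 0 :=
      ModuleCat.hom_ext (LinearMap.ext fun x => Submodule.linearProjOfIsCompl_apply_right hc.symm x)
    have hproj1' : ιq ≫ πq = 𝟙 (ModuleCat.of Λ ↥q) :=
      ModuleCat.hom_ext (Submodule.linearProjOfIsCompl_comp_subtype hc.symm)
    have hproj0' : ιq ≫ πp = 0 :=
      ModuleCat.hom_ext (LinearMap.ext fun x => Submodule.linearProjOfIsCompl_apply_right hc x)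
    -- `G` factors through its image
    have hfactor : G ≫ (πp ≫ ιp) = G := by
      apply ModuleCat.hom_ext
      apply LinearMap.ext
      intro x
      have hmem : G.hom x ∈ p := LinearMap.mem_range_self (f ^ n) x
      show ιp.hom (πp.hom (G.hom x)) = G.hom x
      rw [show πp.hom (G.hom x) = ⟨G.hom x, hmem⟩ from
        Submodule.linearProjOfIsCompl_apply_left hc ⟨G.hom x, hmem⟩]
      rfl
    -- the projection onto `p` fixes `ε`
    have hπ : ε.comp (Ext.mk₀ (πp ≫ ιp)) (add_zero i) = ε := by
      calc ε.comp (Ext.mk₀ (πp ≫ ιp)) (add_zero i)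
          = (ε.comp (Ext.mk₀ G) (add_zero i)).comp (Ext.mk₀ (πp ≫ ιp)) (add_zero i) := by
            rw [hpow n]
        _ = ε.comp (Ext.mk₀ (G ≫ (πp ≫ ιp))) (add_zero i) := (ext_comp_split _ _ _).symm
        _ = ε := by rw [hfactor]; exact hpow n
    -- the image, as a submodule of `W`, is strictly smaller than `N`
    set p' : Submodule Λ W := p.map N.subtype with hp'
    have hlt : p' < N := by
      refine lt_of_le_of_ne (Submodule.map_subtype_le N p) (fun hEq => ?_)
      have htop : p = ⊤ :=
        Submodule.map_injective_of_injective N.injective_subtype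
          (hEq.trans N.map_subtype_top.symm)
      have hd : Disjoint q p := hc.disjoint.symm
      rw [htop] at hd
      exact hq (disjoint_top.mp hd)
    set u : ModuleCat.of Λ ↥p ≅ ModuleCat.of Λ ↥p' :=
      (Submodule.equivMapOfInjective N.subtype N.injective_subtype p).toModuleIso with hu
    -- the pushed-out extension on `p'` is universal
    have huniv' : ∀ x : Ext M T i, ∃ ψ : ModuleCat.of Λ ↥p' ⟶ T,
        (ε.comp (Ext.mk₀ (πp ≫ u.hom)) (add_zero i)).comp (Ext.mk₀ ψ) (add_zero i) = x := by
      intro x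
      obtain ⟨θx, hθx⟩ := huniv x
      refine ⟨u.inv ≫ ιp ≫ θx, ?_⟩
      rw [← ext_comp_split,
        show (πp ≫ u.hom) ≫ (u.inv ≫ ιp ≫ θx) = (πp ≫ ιp) ≫ θx by simp,
        ext_comp_split, hπ, hθx]
    obtain ⟨I, J₁, e₁, hsum, h0, hu', hm⟩ :=
      IH p' hlt (ε.comp (Ext.mk₀ (πp ≫ u.hom)) (add_zero i)) huniv'
    -- the decomposition `N ≅ p ⊞ q`
    obtain ⟨c, hcfst, hcinl⟩ : ∃ c : ModuleCat.of Λ ↥N ≅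
        ModuleCat.of Λ ↥p ⊞ ModuleCat.of Λ ↥q,
        c.hom ≫ biprod.fst = πp ∧ ιp ≫ c.hom = biprod.inl := by
      have hinl : ιp ≫ biprod.lift πp πq = biprod.inl := by
        apply biprod.hom_ext <;> simp [hproj1, hproj0]
      refine ⟨⟨biprod.lift πp πq, biprod.desc ιp ιq, ?_, ?_⟩, by simp, hinl⟩
      · rw [biprod.lift_desc]
        apply ModuleCat.hom_ext
        apply LinearMap.ext
        intro x
        exact Submodule.projection_add_projection_eq_self hc x
      · apply biprod.hom_ext'
        · rw [biprod.inl_desc_assoc, hinl, Category.comp_id]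
        · rw [biprod.inr_desc_assoc, Category.comp_id]
          apply biprod.hom_ext <;> simp [hproj1', hproj0']
    -- assemble the final decomposition
    set e : ModuleCat.of Λ ↥N ≅ I ⊞ (J₁ ⊞ ModuleCat.of Λ ↥q) :=
      c ≪≫ biprod.mapIso (u ≪≫ e₁) (Iso.refl (ModuleCat.of Λ ↥q)) ≪≫
        biprod.associator I J₁ (ModuleCat.of Λ ↥q) with he
    have hefst : e.hom ≫ biprod.fst = (πp ≫ u.hom) ≫ (e₁.hom ≫ biprod.fst) := by
      simp only [he, Iso.trans_hom, biprod.mapIso_hom, Category.assoc,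
        biprod.associator_hom]
      rw [biprod.lift_fst, ← Category.assoc _ biprod.fst biprod.fst, biprod.map_fst]
      rw [← hcfst]
      simp
    have hesnd : (πp ≫ ιp) ≫ e.hom ≫ biprod.snd
        = ((πp ≫ u.hom) ≫ (e₁.hom ≫ biprod.snd)) ≫ biprod.inl := by
      simp only [he, Iso.trans_hom, biprod.mapIso_hom, Category.assoc,
        biprod.associator_hom]
      rw [biprod.lift_snd, reassoc_of% hcinl, biprod.inl_map_assoc]
      apply biprod.hom_ext <;> simp
    have hval : ε.comp (Ext.mk₀ (e.hom ≫ biprod.fst)) (add_zero i)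
        = (ε.comp (Ext.mk₀ (πp ≫ u.hom)) (add_zero i)).comp
            (Ext.mk₀ (e₁.hom ≫ biprod.fst)) (add_zero i) := by
      rw [hefst, ext_comp_split]
    refine ⟨I, J₁ ⊞ ModuleCat.of Λ ↥q, e, ?_, ?_, ?_, ?_⟩
    · refine catSummand_trans hsum ⟨u.inv ≫ ιp, πp ≫ u.hom, ?_⟩
      rw [Category.assoc, ← Category.assoc ιp πp, hproj1, Category.id_comp,
        Iso.inv_hom_id]
    · have h2 : ε.comp (Ext.mk₀ (e.hom ≫ biprod.snd)) (add_zero i)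
          = (ε.comp (Ext.mk₀ (πp ≫ ιp)) (add_zero i)).comp
              (Ext.mk₀ (e.hom ≫ biprod.snd)) (add_zero i) := by rw [hπ]
      rw [h2, ← ext_comp_split, ← Category.assoc, Category.assoc (πp ≫ ιp),
        hesnd, ext_comp_split, ext_comp_split, h0, Ext.zero_comp]
    · intro x
      obtain ⟨ψ, hψ⟩ := hu' x
      exact ⟨ψ, by rw [hval, hψ]⟩
    · intro θ' hθ'
      rw [hval] at hθ'
      exact hm θ' hθ'

end Helpers

/-- Let `Λ` be an artin algebra (finite module over a commutative artinian
ring `R`) and `T` a finite length module.  If `ε ∈ Ext^i(M, T')` is a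
universal `add T`-extension (i.e. `T' ∈ add T` and pushing `ε` out along
morphisms `T' ⟶ T` yields all of `Ext^i(M, T)`), then there is a
decomposition `T' ≅ I ⊞ J` under which `ε = ε̄ ⊕ 0`, where
`ε̄ ∈ Ext^i(M, I)` is a minimal universal `add T`-extension (any
`θ : I ⟶ I` fixing `ε̄` under pushout is an automorphism). -/
theorem universal_extension_minimal_decomposition
    (R Λ : Type) [CommRing R] [IsArtinianRing R] [Ring Λ] [Algebra R Λ]
    [Module.Finite R Λ]
    (M T T' : ModuleCat.{0} Λ)
    (hMfl : IsFiniteLength Λ M) (hTfl : IsFiniteLength Λ T)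
    (hT' : CatInAdd T T') (i : ℕ) (ε : Ext M T' i)
    (huniv : ∀ x : Ext M T i, ∃ θ : T' ⟶ T, ε.comp (Ext.mk₀ θ) (add_zero i) = x) :
    ∃ (I J : ModuleCat.{0} Λ) (e : T' ≅ I ⊞ J),
      CatInAdd T I ∧
      ε.comp (Ext.mk₀ (e.hom ≫ biprod.snd)) (add_zero i) = 0 ∧
      (∀ x : Ext M T i, ∃ θ : I ⟶ T,
        (ε.comp (Ext.mk₀ (e.hom ≫ biprod.fst)) (add_zero i)).comp
          (Ext.mk₀ θ) (add_zero i) = x) ∧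
      (∀ θ : I ⟶ I,
        (ε.comp (Ext.mk₀ (e.hom ≫ biprod.fst)) (add_zero i)).comp
            (Ext.mk₀ θ) (add_zero i)
          = ε.comp (Ext.mk₀ (e.hom ≫ biprod.fst)) (add_zero i) → IsIso θ) := by
  obtain ⟨k, i₀, p₀, hsplit⟩ := hT'
  obtain ⟨hTn, hTa⟩ := isFiniteLength_iff_isNoetherian_isArtinian.mp hTfl
  haveI : IsNoetherian Λ ↑(ModuleCat.of Λ (Fin k → T)) := by
    show IsNoetherian Λ (Fin k → T)
    infer_instance
  haveI : IsArtinian Λ ↑(ModuleCat.of Λ (Fin k → T)) := by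
    show IsArtinian Λ (Fin k → T)
    infer_instance
  have hinj : Function.Injective i₀ := by
    intro a b hab
    have ha : p₀ (i₀ a) = a := LinearMap.congr_fun (congrArg ModuleCat.Hom.hom hsplit) a
    have hb : p₀ (i₀ b) = b := LinearMap.congr_fun (congrArg ModuleCat.Hom.hom hsplit) b
    rw [← ha, ← hb, hab]
  set N : Submodule Λ ↑(ModuleCat.of Λ (Fin k → T)) := LinearMap.range i₀.hom with hN
  set w : T' ≅ ModuleCat.of Λ ↥N := (LinearEquiv.ofInjective i₀.hom hinj).toModuleIso with hw
  have huniv'' : ∀ x : Ext M T i, ∃ ψ : ModuleCat.of Λ ↥N ⟶ T,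
      (ε.comp (Ext.mk₀ w.hom) (add_zero i)).comp (Ext.mk₀ ψ) (add_zero i) = x := by
    intro x
    obtain ⟨θx, hθx⟩ := huniv x
    refine ⟨w.inv ≫ θx, ?_⟩
    rw [← ext_comp_split, show w.hom ≫ (w.inv ≫ θx) = θx by simp, hθx]
  obtain ⟨I, J, e₂, hsum, h0, hu, hm⟩ :=
    aux_minimal M T (ModuleCat.of Λ (Fin k → T)) i N
      (ε.comp (Ext.mk₀ w.hom) (add_zero i)) huniv''
  have hval : ∀ (Z : ModuleCat.{0} Λ) (g : I ⊞ J ⟶ Z),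
      ε.comp (Ext.mk₀ ((w ≪≫ e₂).hom ≫ g)) (add_zero i)
        = (ε.comp (Ext.mk₀ w.hom) (add_zero i)).comp
            (Ext.mk₀ (e₂.hom ≫ g)) (add_zero i) := by
    intro Z g
    rw [Iso.trans_hom, Category.assoc, ext_comp_split]
  refine ⟨I, J, w ≪≫ e₂, ?_, ?_, ?_, ?_⟩
  · exact ⟨k, catSummand_trans hsum
      (catSummand_trans ⟨w.inv, w.hom, w.inv_hom_id⟩ ⟨i₀, p₀, hsplit⟩)⟩
  · rw [hval, h0]
  · intro x
    obtain ⟨ψ, hψ⟩ := hu x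
    exact ⟨ψ, by rw [hval, hψ]⟩
  · intro θ' hθ'
    rw [hval] at hθ'
    exact hm θ' hθ'
end

section
/- Minimal universal add(T)-extensions are unique up to isomorphism: if ε ∈ Ext^i(M,T') and η ∈ Ext^i(M,T'') are both minimal universal add(T)-extensions of M, then there is an isomorphism φ: T' → T'' with φ·ε = η. -/
open CategoryTheory Abelian Limits

attribute [local instance] HasDerivedCategory.standard

section Aux

variable {Λ : Type} [Ring Λ]

lemma ext_mk₀_add {X Y : ModuleCat.{0} Λ} (f g : X ⟶ Y) :
    (Ext.mk₀ (f + g) : Ext X Y 0) = Ext.mk₀ f + Ext.mk₀ g := by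
  ext
  rw [Ext.add_hom, Ext.mk₀_hom, Ext.mk₀_hom, Ext.mk₀_hom, Functor.map_add]
  simp [ShiftedHom.mk₀, Preadditive.add_comp]

lemma ext_mk₀_sum {X Y : ModuleCat.{0} Λ} {ι : Type} (s : Finset ι) (f : ι → (X ⟶ Y)) :
    (Ext.mk₀ (∑ j ∈ s, f j) : Ext X Y 0) = ∑ j ∈ s, Ext.mk₀ (f j) := by
  classical
  induction s using Finset.cons_induction with
  | empty => simp
  | cons j s hj ih => rw [Finset.sum_cons, Finset.sum_cons, ext_mk₀_add, ih]

/-- Universality of `ε` over `T` yields, for any `T'' ∈ add T` and any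
`η ∈ Ext^i(M, T'')`, a morphism `α : T' ⟶ T''` with `α · ε = η`. -/
lemma exists_hom_of_universal {M T T' T'' : ModuleCat.{0} Λ} (hT'' : CatInAdd T T'')
    {i : ℕ} (ε : Ext M T' i) (η : Ext M T'' i)
    (hεuniv : ∀ x : Ext M T i, ∃ θ : T' ⟶ T, ε.comp (Ext.mk₀ θ) (add_zero i) = x) :
    ∃ α : T' ⟶ T'', ε.comp (Ext.mk₀ α) (add_zero i) = η := by
  obtain ⟨k, s, p, hsp⟩ := hT''
  let P : ModuleCat.{0} Λ := ModuleCat.of Λ (Fin k → T)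
  let π : (j : Fin k) → (P ⟶ T) := fun j => ModuleCat.ofHom (LinearMap.proj (R := Λ) (φ := fun _ : Fin k => T) j)
  let ιm : (j : Fin k) → (T ⟶ P) := fun j => ModuleCat.ofHom (LinearMap.single Λ (fun _ : Fin k => T) j)
  choose θ hθ using fun j : Fin k => hεuniv (η.comp (Ext.mk₀ (s ≫ π j)) (add_zero i))
  have hid : (∑ j : Fin k, π j ≫ ιm j) = 𝟙 P := by
    apply ModuleCat.hom_ext
    apply LinearMap.ext
    intro x
    have : (∑ j : Fin k, π j ≫ ιm j).hom x = ∑ j : Fin k, (π j ≫ ιm j).hom x := by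
      rw [ModuleCat.hom_sum]
      exact LinearMap.sum_apply _ _ _
    rw [this]
    have : ∀ j : Fin k, (π j ≫ ιm j).hom x = Pi.single j (x j) := fun j => rfl
    simp only [this]
    exact Finset.univ_sum_single x
  refine ⟨(∑ j : Fin k, θ j ≫ ιm j) ≫ p, ?_⟩
  have key : ε.comp (Ext.mk₀ ((∑ j : Fin k, θ j ≫ ιm j) ≫ p)) (add_zero i)
      = ∑ j : Fin k, ε.comp (Ext.mk₀ ((θ j ≫ ιm j) ≫ p)) (add_zero i) := by
    rw [Preadditive.sum_comp, ext_mk₀_sum]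
    exact map_sum (ε.precomp T'' (add_zero i)) _ Finset.univ
  rw [key]
  have step : ∀ j : Fin k, ε.comp (Ext.mk₀ ((θ j ≫ ιm j) ≫ p)) (add_zero i)
      = η.comp (Ext.mk₀ ((s ≫ π j) ≫ (ιm j ≫ p))) (add_zero i) := by
    intro j
    rw [Category.assoc, ← Ext.mk₀_comp_mk₀ (θ j) (ιm j ≫ p),
      ← Ext.comp_assoc_of_third_deg_zero, hθ j,
      Ext.comp_assoc_of_third_deg_zero, Ext.mk₀_comp_mk₀]
  simp only [step]
  have : ∑ j : Fin k, η.comp (Ext.mk₀ ((s ≫ π j) ≫ (ιm j ≫ p))) (add_zero i)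
      = η.comp (Ext.mk₀ (∑ j : Fin k, (s ≫ π j) ≫ (ιm j ≫ p))) (add_zero i) := by
    rw [ext_mk₀_sum]
    exact (map_sum (η.precomp T'' (add_zero i)) _ Finset.univ).symm
  rw [this]
  have : (∑ j : Fin k, (s ≫ π j) ≫ (ιm j ≫ p)) = 𝟙 T'' := by
    have e1 : (∑ j : Fin k, (s ≫ π j) ≫ (ιm j ≫ p))
        = s ≫ (∑ j : Fin k, π j ≫ ιm j) ≫ p := by
      rw [Preadditive.sum_comp, Preadditive.comp_sum]
      simp [Category.assoc]
    rw [e1, hid, Category.id_comp, hsp]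
  rw [this, Ext.comp_mk₀_id]

end Aux

/-- Minimal universal `add T`-extensions are unique up to isomorphism:
if `ε ∈ Ext^i(M, T')` and `η ∈ Ext^i(M, T'')` are both minimal universal
`add T`-extensions of `M`, then there is an isomorphism `φ : T' ≅ T''`
with `φ · ε = η` (pushout of `ε` along `φ` equals `η`). -/
theorem minimal_universal_extension_unique
    (R Λ : Type) [CommRing R] [IsArtinianRing R] [Ring Λ] [Algebra R Λ]
    [Module.Finite R Λ]
    (M T T' T'' : ModuleCat.{0} Λ)
    (hMfl : IsFiniteLength Λ M) (hTfl : IsFiniteLength Λ T)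
    (hT' : CatInAdd T T') (hT'' : CatInAdd T T'')
    (i : ℕ) (ε : Ext M T' i) (η : Ext M T'' i)
    (hεuniv : ∀ x : Ext M T i, ∃ θ : T' ⟶ T, ε.comp (Ext.mk₀ θ) (add_zero i) = x)
    (hεmin : ∀ θ : T' ⟶ T', ε.comp (Ext.mk₀ θ) (add_zero i) = ε → IsIso θ)
    (hηuniv : ∀ x : Ext M T i, ∃ θ : T'' ⟶ T, η.comp (Ext.mk₀ θ) (add_zero i) = x)
    (hηmin : ∀ θ : T'' ⟶ T'', η.comp (Ext.mk₀ θ) (add_zero i) = η → IsIso θ) :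
    ∃ φ : T' ≅ T'', ε.comp (Ext.mk₀ φ.hom) (add_zero i) = η := by
  obtain ⟨α, hα⟩ := exists_hom_of_universal hT'' ε η hεuniv
  obtain ⟨β, hβ⟩ := exists_hom_of_universal hT' η ε hηuniv
  have hαβ : ε.comp (Ext.mk₀ (α ≫ β)) (add_zero i) = ε := by
    rw [← Ext.mk₀_comp_mk₀, ← Ext.comp_assoc_of_third_deg_zero, hα, hβ]
  have hβα : η.comp (Ext.mk₀ (β ≫ α)) (add_zero i) = η := by
    rw [← Ext.mk₀_comp_mk₀, ← Ext.comp_assoc_of_third_deg_zero, hβ, hα]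
  have h1 : IsIso (α ≫ β) := hεmin _ hαβ
  have h2 : IsIso (β ≫ α) := hηmin _ hβα
  have hmono : Mono α := mono_of_mono α β
  have hepi : Epi α := epi_of_epi β α
  have : IsIso α := isIso_of_mono_of_epi α
  exact ⟨asIso α, hα⟩
end

section
/- (Riedtmann–Schofield) Let Λ be a hereditary artin algebra, T and M finite length Λ-modules with M indecomposable and Ext^1(T,M) = 0. Let f: M → T' be a morphism with T' ∈ add(T), factored as M ↠ I ↪ T' through its image. If the epimorphism M ↠ I is proper (not an isomorphism), then the inclusion I ↪ T' is a split monomorphism. -/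
/-- `X` is (isomorphic to) a direct summand of `M`. -/
def IsSummand (Λ : Type) [Ring Λ] (X M : Type) [AddCommGroup X] [Module Λ X]
    [AddCommGroup M] [Module Λ M] : Prop :=
  ∃ (i : X →ₗ[Λ] M) (p : M →ₗ[Λ] X), p ∘ₗ i = LinearMap.id

/-- `X` belongs to `add T`, the additive subcategory generated by the
indecomposable direct summands of `T`. -/
def InAdd (Λ : Type) [Ring Λ] (T X : Type) [AddCommGroup T] [Module Λ T]
    [AddCommGroup X] [Module Λ X] : Prop :=
  ∃ n : ℕ, IsSummand Λ X (Fin n → T)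

/-- `Ext¹_Λ(A, B) = 0`: every short exact sequence `0 → B → E → A → 0` splits. -/
def Ext1Zero (Λ : Type) [Ring Λ] (A B : Type) [AddCommGroup A] [Module Λ A]
    [AddCommGroup B] [Module Λ B] : Prop :=
  ∀ (E : Type) [AddCommGroup E] [Module Λ E] (i : B →ₗ[Λ] E) (p : E →ₗ[Λ] A),
    Function.Injective i → Function.Surjective p → LinearMap.ker p = LinearMap.range i →
    ∃ r : E →ₗ[Λ] B, r ∘ₗ i = LinearMap.id

/-- An indecomposable module: nonzero, and admitting no nontrivial direct sum
decomposition. -/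
def IsIndec (Λ : Type) [Ring Λ] (M : Type) [AddCommGroup M] [Module Λ M] : Prop :=
  (∃ m : M, m ≠ 0) ∧ ∀ N N' : Submodule Λ M, IsCompl N N' → N = ⊥ ∨ N' = ⊥

/-- A hereditary ring: submodules of projective modules are projective. -/
def IsHereditaryRing (Λ : Type) [Ring Λ] : Prop :=
  ∀ (M : Type) [AddCommGroup M] [Module Λ M], Module.Projective Λ M →
    ∀ N : Submodule Λ M, Module.Projective Λ N

section Helpers

variable {Λ : Type} [Ring Λ]

lemma ext1Zero_of_equiv {A A' B : Type} [AddCommGroup A] [Module Λ A]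
    [AddCommGroup A'] [Module Λ A'] [AddCommGroup B] [Module Λ B]
    (e : A' ≃ₗ[Λ] A) (h : Ext1Zero Λ A B) : Ext1Zero Λ A' B := by
  intro E _ _ i p hi hp hker
  refine h E i (e.toLinearMap ∘ₗ p) hi (e.surjective.comp hp) ?_
  rw [LinearMap.ker_comp, ← hker]
  have : LinearMap.ker e.toLinearMap = ⊥ := LinearMap.ker_eq_bot.mpr e.injective
  rw [this, Submodule.comap_bot]

lemma ext1Zero_of_subsingleton {A B : Type} [AddCommGroup A] [Module Λ A] [Subsingleton A]
    [AddCommGroup B] [Module Λ B] : Ext1Zero Λ A B := by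
  intro E _ _ i p hi hp hker
  have hbij : Function.Bijective i := by
    refine ⟨hi, fun x => ?_⟩
    have : x ∈ LinearMap.range i := by
      rw [← hker, LinearMap.mem_ker, Subsingleton.elim (p x) 0]
    exact this
  let e := LinearEquiv.ofBijective i hbij
  refine ⟨e.symm.toLinearMap, ?_⟩
  ext b
  simp only [LinearMap.coe_comp, Function.comp_apply, LinearMap.id_coe, id_eq,
    LinearEquiv.coe_coe]
  exact e.symm_apply_eq.mpr rfl

lemma ext1Zero_prod {A B C : Type} [AddCommGroup A] [Module Λ A]
    [AddCommGroup B] [Module Λ B] [AddCommGroup C] [Module Λ C]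
    (hA : Ext1Zero Λ A C) (hB : Ext1Zero Λ B C) : Ext1Zero Λ (A × B) C := by
  intro E _ _ i p hi hp hker
  set pA : E →ₗ[Λ] A := (LinearMap.fst Λ A B) ∘ₗ p with hpA
  set pB : E →ₗ[Λ] B := (LinearMap.snd Λ A B) ∘ₗ p with hpB
  have hpi : ∀ c : C, p (i c) = 0 := by
    intro c
    have : i c ∈ LinearMap.ker p := by rw [hker]; exact ⟨c, rfl⟩
    exact this
  set EB : Submodule Λ E := LinearMap.ker pA with hEB
  have hiEB : ∀ c : C, i c ∈ EB := fun c => by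
    simp [hEB, pA, LinearMap.mem_ker, hpi c]
  set i₁ : C →ₗ[Λ] EB := LinearMap.codRestrict EB i hiEB with hi₁
  set p₁ : EB →ₗ[Λ] B := pB ∘ₗ EB.subtype with hp₁
  have hi₁inj : Function.Injective i₁ := fun x y hxy => by
    apply hi; exact congrArg Subtype.val hxy
  have hp₁surj : Function.Surjective p₁ := by
    intro b
    obtain ⟨e, he⟩ := hp (0, b)
    refine ⟨⟨e, ?_⟩, ?_⟩
    · simp [hEB, pA, LinearMap.mem_ker, he]
    · simp [hp₁, pB, he]
  have hker₁ : LinearMap.ker p₁ = LinearMap.range i₁ := by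
    ext x
    constructor
    · intro hx
      have hxa : pA x.1 = 0 := x.2
      have hxb : pB x.1 = 0 := hx
      have : p x.1 = 0 := by
        have h1 : (p x.1).1 = 0 := hxa
        have h2 : (p x.1).2 = 0 := hxb
        exact Prod.ext h1 h2
      rw [← LinearMap.mem_ker, hker] at this
      obtain ⟨c, hc⟩ := this
      exact ⟨c, Subtype.ext hc⟩
    · rintro ⟨c, rfl⟩
      show pB (i c) = 0
      simp [pB, hpi c]
  obtain ⟨rB, hrB⟩ := hB EB i₁ p₁ hi₁inj hp₁surj hker₁
  set N : Submodule Λ E := (LinearMap.ker rB).map EB.subtype with hN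
  have hNle : N ≤ LinearMap.ker pA := by
    rintro x ⟨y, hy, rfl⟩
    exact y.2
  set Ebar := E ⧸ N
  set ibar : C →ₗ[Λ] Ebar := N.mkQ ∘ₗ i with hibar
  have hrBi : ∀ c, rB (i₁ c) = c := fun c => congrFun (congrArg (fun g => g.toFun) hrB) c
  have hibarinj : Function.Injective ibar := by
    intro x y hxy
    have : i x - i y ∈ N := by
      rw [← Submodule.Quotient.eq]
      exact hxy
    obtain ⟨z, hz, hz2⟩ := this
    have hz3 : z = i₁ x - i₁ y := by
      apply Subtype.ext
      exact hz2
    have : rB z = 0 := hz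
    rw [hz3, map_sub, hrBi, hrBi] at this
    exact sub_eq_zero.mp this
  set pbar : Ebar →ₗ[Λ] A := N.liftQ pA hNle with hpbar
  have hpbarsurj : Function.Surjective pbar := by
    intro a
    obtain ⟨e, he⟩ := hp (a, 0)
    refine ⟨N.mkQ e, ?_⟩
    show pA e = a
    simp [pA, he]
  have hkerbar : LinearMap.ker pbar = LinearMap.range ibar := by
    ext x
    obtain ⟨e, rfl⟩ := N.mkQ_surjective x
    constructor
    · intro hx
      have hxa : pA e = 0 := hx
      have heEB : e ∈ EB := hxa
      set c := rB ⟨e, heEB⟩ with hc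
      refine ⟨c, ?_⟩
      show N.mkQ (i c) = N.mkQ e
      rw [← sub_eq_zero, ← map_sub, Submodule.mkQ_apply, Submodule.Quotient.mk_eq_zero]
      refine ⟨⟨i c - e, ?_⟩, ?_, rfl⟩
      · exact sub_mem (hiEB c) heEB
      · show rB (⟨i c - e, _⟩ : EB) = 0
        have heq : (⟨i c - e, sub_mem (hiEB c) heEB⟩ : EB) = i₁ c - ⟨e, heEB⟩ := by
          apply Subtype.ext
          show i c - e = (i₁ c : E) - e
          rfl
        rw [heq, map_sub, hrBi, hc]
        simp
    · rintro ⟨c, hc⟩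
      rw [← hc]
      show pA (i c) = 0
      exact hiEB c
  obtain ⟨rA, hrA⟩ := hA Ebar ibar pbar hibarinj hpbarsurj hkerbar
  refine ⟨rA ∘ₗ N.mkQ, ?_⟩
  ext c
  exact congrFun (congrArg (fun g => g.toFun) hrA) c

lemma ext1Zero_of_summand {X Y B : Type} [AddCommGroup X] [Module Λ X]
    [AddCommGroup Y] [Module Λ Y] [AddCommGroup B] [Module Λ B]
    (hs : IsSummand Λ X Y) (h : Ext1Zero Λ Y B) : Ext1Zero Λ X B := by
  obtain ⟨ι, ρ, hρι⟩ := hs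
  have hρι' : ∀ x, ρ (ι x) = x := fun x => congrFun (congrArg (fun g => g.toFun) hρι) x
  intro E _ _ i p hi hp hker
  have hpi : ∀ b : B, p (i b) = 0 := by
    intro b
    have : i b ∈ LinearMap.ker p := by rw [hker]; exact ⟨b, rfl⟩
    exact this
  set d : E × Y →ₗ[Λ] X := p ∘ₗ LinearMap.fst Λ E Y - ρ ∘ₗ LinearMap.snd Λ E Y with hd
  set E' : Submodule Λ (E × Y) := LinearMap.ker d with hE'
  have hmem : ∀ z : E × Y, z ∈ E' ↔ p z.1 = ρ z.2 := by
    intro z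
    rw [hE', LinearMap.mem_ker, hd]
    constructor
    · intro hz; have := sub_eq_zero.mp hz; exact this
    · intro hz; simp [LinearMap.sub_apply]; exact sub_eq_zero.mpr hz
  set i' : B →ₗ[Λ] E' := LinearMap.codRestrict E' ((LinearMap.inl Λ E Y) ∘ₗ i)
    (fun b => (hmem _).mpr (by simp [hpi b])) with hi'
  set p' : E' →ₗ[Λ] Y := (LinearMap.snd Λ E Y) ∘ₗ E'.subtype with hp'
  have hi'inj : Function.Injective i' := by
    intro x y hxy
    apply hi
    have := congrArg Subtype.val hxy
    exact congrArg Prod.fst this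
  have hp'surj : Function.Surjective p' := by
    intro y
    obtain ⟨e, he⟩ := hp (ρ y)
    exact ⟨⟨(e, y), (hmem _).mpr he⟩, rfl⟩
  have hker' : LinearMap.ker p' = LinearMap.range i' := by
    ext z
    constructor
    · intro hz
      have hz2 : (z : E × Y).2 = 0 := hz
      have hz1 : p (z : E × Y).1 = 0 := by
        have := (hmem _).mp z.2
        rw [hz2] at this; simpa using this
      rw [← LinearMap.mem_ker, hker] at hz1
      obtain ⟨b, hb⟩ := hz1
      refine ⟨b, Subtype.ext ?_⟩
      show ((i b, 0) : E × Y) = z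
      rw [Prod.ext_iff]
      exact ⟨hb, hz2.symm⟩
    · rintro ⟨b, rfl⟩
      show ((LinearMap.inl Λ E Y) (i b)).2 = 0
      rfl
  obtain ⟨r', hr'⟩ := h E' i' p' hi'inj hp'surj hker'
  set j : E →ₗ[Λ] E' := LinearMap.codRestrict E'
    (LinearMap.prod LinearMap.id (ι ∘ₗ p)) (fun e => (hmem _).mpr (by simp [hρι'])) with hj
  refine ⟨r' ∘ₗ j, ?_⟩
  ext b
  have h1 : j (i b) = i' b := by
    apply Subtype.ext
    show ((i b, ι (p (i b))) : E × Y) = (i b, 0)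
    rw [hpi b, map_zero]
  show r' (j (i b)) = b
  rw [h1]
  exact congrFun (congrArg (fun g => g.toFun) hr') b

/-- linear equivalence `(Fin (n+1) → T) ≃ T × (Fin n → T)` -/
def piFinSuccLinearEquiv (n : ℕ) (T : Type) [AddCommGroup T] [Module Λ T] :
    (Fin (n + 1) → T) ≃ₗ[Λ] T × (Fin n → T) :=
  { (Fin.consEquiv fun _ : Fin (n + 1) => T).symm with
    map_add' := fun _ _ => rfl
    map_smul' := fun _ _ => rfl }

lemma ext1Zero_pi {T B : Type} [AddCommGroup T] [Module Λ T] [AddCommGroup B] [Module Λ B]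
    (hT : Ext1Zero Λ T B) : ∀ n : ℕ, Ext1Zero Λ (Fin n → T) B := by
  intro n
  induction n with
  | zero =>
    haveI : Subsingleton (Fin 0 → T) := ⟨fun a b => funext fun i => i.elim0⟩
    exact ext1Zero_of_subsingleton
  | succ n ih =>
    exact ext1Zero_of_equiv (piFinSuccLinearEquiv n T) (ext1Zero_prod hT ih)

lemma ext1Zero_of_inAdd {T T' B : Type} [AddCommGroup T] [Module Λ T]
    [AddCommGroup T'] [Module Λ T'] [AddCommGroup B] [Module Λ B]
    (hT' : InAdd Λ T T') (hT : Ext1Zero Λ T B) : Ext1Zero Λ T' B := by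
  obtain ⟨n, hs⟩ := hT'
  exact ext1Zero_of_summand hs (ext1Zero_pi hT n)

end Helpers

/-- **Riedtmann–Schofield.**  Over a hereditary artin algebra, if `M` is
indecomposable with `Ext¹(T, M) = 0` and `f : M → T'` (with `T' ∈ add T`) has a
proper epimorphism onto its image, then the inclusion of the image into `T'`
is a split monomorphism. -/
theorem riedtmann_schofield (Λ : Type) [Ring Λ] [IsArtinianRing Λ]
    (hH : IsHereditaryRing Λ)
    (T M T' : Type) [AddCommGroup T] [Module Λ T] [AddCommGroup M] [Module Λ M]
    [AddCommGroup T'] [Module Λ T']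
    (hTfl : IsFiniteLength Λ T) (hMfl : IsFiniteLength Λ M)
    (hM : IsIndec Λ M) (hext : Ext1Zero Λ T M) (hT' : InAdd Λ T T')
    (f : M →ₗ[Λ] T') (hproper : ¬ Function.Injective f) :
    ∃ r : T' →ₗ[Λ] LinearMap.range f,
      r ∘ₗ (LinearMap.range f).subtype = LinearMap.id := by
  classical
  obtain ⟨hMnoeth, hMart⟩ := isFiniteLength_iff_isNoetherian_isArtinian.mp hMfl
  set U : Submodule Λ T' := LinearMap.range f with hU
  set u : U →ₗ[Λ] T' := U.subtype with hu
  have huinj : Function.Injective u := U.injective_subtype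
  set g : M →ₗ[Λ] U := f.rangeRestrict with hg
  have hgsurj : Function.Surjective g := f.surjective_rangeRestrict
  have hug : ∀ m, u (g m) = f m := fun m => rfl
  set C := T' ⧸ U with hC
  set π : T' →ₗ[Λ] C := U.mkQ with hπ
  have hπsurj : Function.Surjective π := U.mkQ_surjective
  have hkerπ : ∀ t : T', π t = 0 ↔ t ∈ U := by
    intro t
    rw [hπ, Submodule.mkQ_apply, Submodule.Quotient.mk_eq_zero]
  -- free presentation of C
  set Q : Type := C →₀ Λ with hQ
  set σ : Q →ₗ[Λ] C := Finsupp.linearCombination Λ id with hσ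
  have hσsurj : Function.Surjective σ := Finsupp.linearCombination_id_surjective Λ C
  set Θ : Submodule Λ Q := LinearMap.ker σ with hΘ
  have hΘproj : Module.Projective Λ Θ := hH Q inferInstance Θ
  -- lift σ through π
  obtain ⟨τ, hτ⟩ := Module.projective_lifting_property π σ hπsurj
  have hτ' : ∀ q : Q, π (τ q) = σ q := fun q => congrFun (congrArg (fun g => g.toFun) hτ) q
  have hτΘ : ∀ θ : Θ, τ θ ∈ U := by
    intro θ
    rw [← hkerπ, hτ' θ]
    exact θ.2
  set α : Θ →ₗ[Λ] U := LinearMap.codRestrict U (τ ∘ₗ Θ.subtype) hτΘ with hα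
  obtain ⟨φ, hφ⟩ := Module.projective_lifting_property (h := hΘproj) g α hgsurj
  have hφ' : ∀ θ : Θ, g (φ θ) = α θ := fun θ => congrFun (congrArg (fun g => g.toFun) hφ) θ
  -- pushout X
  set W : Submodule Λ (M × Q) := LinearMap.range (LinearMap.prod (-φ) Θ.subtype) with hW
  set X := (M × Q) ⧸ W with hX
  set ι : M →ₗ[Λ] X := W.mkQ ∘ₗ LinearMap.inl Λ M Q with hι
  have hWker1 : W ≤ LinearMap.ker (σ ∘ₗ LinearMap.snd Λ M Q) := by
    rintro x ⟨θ, rfl⟩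
    show σ (θ : Q) = 0
    exact θ.2
  set σbar : X →ₗ[Λ] C := W.liftQ (σ ∘ₗ LinearMap.snd Λ M Q) hWker1 with hσbar
  have hWker2 : W ≤ LinearMap.ker (f ∘ₗ LinearMap.fst Λ M Q + τ ∘ₗ LinearMap.snd Λ M Q) := by
    rintro x ⟨θ, rfl⟩
    show f (-φ θ) + τ (θ : Q) = 0
    have : f (φ θ) = u (α θ) := by rw [← hug, hφ']
    have hτα : u (α θ) = τ (θ : Q) := rfl
    rw [map_neg, this, hτα]
    simp
  set βbar : X →ₗ[Λ] T' := W.liftQ (f ∘ₗ LinearMap.fst Λ M Q + τ ∘ₗ LinearMap.snd Λ M Q) hWker2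
    with hβbar
  have hβι : ∀ m : M, βbar (ι m) = f m := by
    intro m
    show βbar (W.mkQ (m, 0)) = f m
    rw [hβbar, Submodule.mkQ_apply, Submodule.liftQ_apply]
    show f m + τ 0 = f m
    rw [map_zero, add_zero]
  have hπβ : ∀ x : X, π (βbar x) = σbar x := by
    intro x
    obtain ⟨⟨m, q⟩, rfl⟩ := W.mkQ_surjective x
    show π (f m + τ q) = σ q
    rw [map_add, hτ' q]
    have : π (f m) = 0 := (hkerπ _).mpr ⟨m, rfl⟩
    rw [this, zero_add]
  have hιinj : Function.Injective ι := by
    intro m m' hmm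
    have : ((m, 0) : M × Q) - (m', 0) ∈ W := by
      rw [← Submodule.Quotient.eq]
      exact hmm
    obtain ⟨θ, hθ⟩ := this
    have h2 : (θ : Q) = 0 := by
      have := congrArg Prod.snd hθ
      simpa using this
    have h3 : θ = 0 := Subtype.ext h2
    have h1 : -φ θ = m - m' := by
      have := congrArg Prod.fst hθ
      simpa using this
    rw [h3, map_zero, neg_zero] at h1
    exact sub_eq_zero.mp h1.symm
  have hσbarsurj : Function.Surjective σbar := by
    intro c
    obtain ⟨q, rfl⟩ := hσsurj c
    exact ⟨W.mkQ (0, q), rfl⟩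
  have hkerσbar : ∀ x : X, σbar x = 0 → ∃ m, ι m = x := by
    intro x hx
    obtain ⟨⟨m, q⟩, rfl⟩ := W.mkQ_surjective x
    have hq : σ q = 0 := hx
    refine ⟨m + φ ⟨q, hq⟩, ?_⟩
    show W.mkQ (m + φ ⟨q, hq⟩, 0) = W.mkQ (m, q)
    rw [← sub_eq_zero, ← map_sub, Submodule.mkQ_apply, Submodule.Quotient.mk_eq_zero]
    refine ⟨-⟨q, hq⟩, ?_⟩
    have heval : ((-φ).prod Θ.subtype) (-⟨q, hq⟩) = (φ ⟨q, hq⟩, -q) := by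
      have hmn := LinearMap.map_neg φ (⟨q, hq⟩ : Θ)
      simp [LinearMap.prod_apply, LinearMap.neg_apply, hmn]
    rw [heval]
    apply Prod.ext
    · show φ ⟨q, hq⟩ = m + φ ⟨q, hq⟩ - m
      abel
    · show -q = 0 - q
      rw [zero_sub]
  -- pullback Z of σbar and π
  set dZ : X × T' →ₗ[Λ] C := σbar ∘ₗ LinearMap.fst Λ X T' - π ∘ₗ LinearMap.snd Λ X T' with hdZ
  set Z : Submodule Λ (X × T') := LinearMap.ker dZ with hZ
  have hZmem : ∀ z : X × T', z ∈ Z ↔ σbar z.1 = π z.2 := by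
    intro z
    rw [hZ, LinearMap.mem_ker, hdZ]
    constructor
    · intro h
      exact sub_eq_zero.mp h
    · intro h
      show σbar z.1 - π z.2 = 0
      exact sub_eq_zero.mpr h
  have hσι : ∀ m : M, σbar (ι m) = 0 := by
    intro m
    show σbar (W.mkQ (m, 0)) = 0
    rw [hσbar, Submodule.mkQ_apply, Submodule.liftQ_apply]
    show σ 0 = 0
    rw [map_zero]
  set ι' : M →ₗ[Λ] Z := LinearMap.codRestrict Z ((LinearMap.inl Λ X T') ∘ₗ ι)
    (fun m => (hZmem _).mpr (by show σbar (ι m) = π 0; rw [hσι, map_zero])) with hι'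
  set p' : Z →ₗ[Λ] T' := (LinearMap.snd Λ X T') ∘ₗ Z.subtype with hp'
  have hι'val : ∀ m : M, ((ι' m : Z) : X × T') = (ι m, 0) := fun m => rfl
  have hι'inj : Function.Injective ι' := by
    intro a b hab
    apply hιinj
    exact congrArg Prod.fst (congrArg Subtype.val hab)
  have hp'surj : Function.Surjective p' := by
    intro t
    obtain ⟨x, hx⟩ := hσbarsurj (π t)
    exact ⟨⟨(x, t), (hZmem _).mpr hx⟩, rfl⟩
  have hp'ι' : ∀ m : M, p' (ι' m) = 0 := fun m => rfl
  have hkerp' : LinearMap.ker p' = LinearMap.range ι' := by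
    ext z
    constructor
    · intro hz
      have hz2 : (z : X × T').2 = 0 := hz
      have hz1 : σbar (z : X × T').1 = 0 := by
        have hm := (hZmem _).mp z.2
        rw [hz2, map_zero] at hm
        exact hm
      obtain ⟨m, hm⟩ := hkerσbar _ hz1
      refine ⟨m, Subtype.ext ?_⟩
      rw [hι'val]
      apply Prod.ext
      · exact hm
      · exact hz2.symm
    · rintro ⟨m, rfl⟩
      show p' (ι' m) = 0
      exact hp'ι' m
  -- split Z using Ext1Zero Λ T' M
  have hextT' : Ext1Zero Λ T' M := ext1Zero_of_inAdd hT' hext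
  obtain ⟨ρ, hρ⟩ := hextT' Z ι' p' hι'inj hp'surj hkerp'
  have hρι' : ∀ m : M, ρ (ι' m) = m := fun m => congrFun (congrArg (fun g => g.toFun) hρ) m
  -- the section s of p' with values in ker ρ
  set Nρ : Submodule Λ Z := LinearMap.ker ρ with hNρ
  have hbijN : Function.Bijective (p' ∘ₗ Nρ.subtype) := by
    constructor
    · intro a b hab
      have hdiff : (a : Z) - b ∈ LinearMap.ker p' := by
        rw [LinearMap.mem_ker, map_sub]
        exact sub_eq_zero.mpr hab
      rw [hkerp'] at hdiff
      obtain ⟨m, hm⟩ := hdiff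
      have hρ0 : ρ ((a : Z) - b) = 0 := by
        rw [map_sub]
        have ha : ρ (a : Z) = 0 := a.2
        have hb : ρ (b : Z) = 0 := b.2
        rw [ha, hb, sub_zero]
      rw [← hm, hρι'] at hρ0
      have : (a : Z) - b = 0 := by rw [← hm, hρ0, map_zero]
      exact Subtype.ext (sub_eq_zero.mp this)
    · intro t
      obtain ⟨z, hz⟩ := hp'surj t
      refine ⟨⟨z - ι' (ρ z), ?_⟩, ?_⟩
      · show ρ (z - ι' (ρ z)) = 0
        rw [map_sub, hρι', sub_self]
      · show p' (z - ι' (ρ z)) = t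
        rw [map_sub, hp'ι', sub_zero, hz]
  set eN : Nρ ≃ₗ[Λ] T' := LinearEquiv.ofBijective (p' ∘ₗ Nρ.subtype) hbijN with heN
  have heNapp : ∀ z : Nρ, eN z = p' (z : Z) := fun z => rfl
  set s : T' →ₗ[Λ] Z := Nρ.subtype ∘ₗ eN.symm.toLinearMap with hs
  have hp's : ∀ t : T', p' (s t) = t := by
    intro t
    show p' ((eN.symm t : Nρ) : Z) = t
    rw [← heNapp]
    exact eN.apply_symm_apply t
  -- the map w
  have hwmem : ∀ v : U, ((0, u v) : X × T') ∈ Z := by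
    intro v
    refine (hZmem _).mpr ?_
    rw [map_zero]
    symm
    exact (hkerπ _).mpr v.2
  set w : U →ₗ[Λ] Z := LinearMap.codRestrict Z ((LinearMap.inr Λ X T') ∘ₗ u)
    (fun v => hwmem v) with hw
  have hwval : ∀ v : U, ((w v : Z) : X × T') = (0, u v) := fun v => rfl
  set h₀ : U →ₗ[Λ] M := ρ ∘ₗ w with hh₀
  -- the key relation (*)
  have hstar : ∀ v : U, ((s (u v) : Z) : X × T') = ((w v : Z) : X × T') - ((ι' (h₀ v) : Z) : X × T') := by
    intro v
    have hmem : w v - ι' (h₀ v) ∈ Nρ := by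
      show ρ (w v - ι' (h₀ v)) = 0
      rw [map_sub, hρι']
      show ρ (w v) - ρ (w v) = 0
      rw [sub_self]
    have happ : eN ⟨w v - ι' (h₀ v), hmem⟩ = u v := by
      rw [heNapp]
      show p' (w v - ι' (h₀ v)) = u v
      rw [map_sub, hp'ι', sub_zero]
      rfl
    have hsymm : eN.symm (u v) = ⟨w v - ι' (h₀ v), hmem⟩ := by
      rw [LinearEquiv.symm_apply_eq, happ]
    show ((eN.symm (u v) : Nρ) : Z).val = _
    rw [hsymm]
    rfl
  -- γ and r₁
  set γ : T' →ₗ[Λ] X := (LinearMap.fst Λ X T') ∘ₗ Z.subtype ∘ₗ s with hγ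
  have hσγ : ∀ t : T', σbar (γ t) = π t := by
    intro t
    have hm := (hZmem ((s t : Z) : X × T')).mp (s t).2
    have h2 : ((s t : Z) : X × T').2 = p' (s t) := rfl
    rw [h2, hp's] at hm
    exact hm
  have hr₁mem : ∀ t : T', t - βbar (γ t) ∈ U := by
    intro t
    rw [← hkerπ, map_sub, hπβ, hσγ, sub_self]
  set r₁ : T' →ₗ[Λ] U := LinearMap.codRestrict U (LinearMap.id - βbar ∘ₗ γ) hr₁mem with hr₁def
  have hr₁val : ∀ t : T', u (r₁ t) = t - βbar (γ t) := fun t => rfl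
  -- key identity : r₁ (u v) = v + g (h₀ v)
  have hkey : ∀ v : U, r₁ (u v) = v + g (h₀ v) := by
    intro v
    apply huinj
    rw [hr₁val]
    have hγuv : γ (u v) = -ι (h₀ v) := by
      show ((s (u v) : Z) : X × T').1 = -ι (h₀ v)
      rw [hstar v]
      show ((w v : Z) : X × T').1 - ((ι' (h₀ v) : Z) : X × T').1 = -ι (h₀ v)
      rw [hwval, hι'val]
      show (0 : X) - ι (h₀ v) = -ι (h₀ v)
      rw [zero_sub]
    rw [hγuv, map_neg, hβι, sub_neg_eq_add, map_add, hug]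
  -- ψ and the Fitting argument
  set ψ : M →ₗ[Λ] M := h₀ ∘ₗ g with hψ
  have hgid : ∀ m : M, r₁ (f m) = g m + g (ψ m) := fun m => hkey (g m)
  obtain ⟨n0, hn0⟩ := Filter.eventually_atTop.mp (LinearMap.eventually_isCompl_ker_pow_range_pow ψ)
  set n : ℕ := max n0 1 with hn
  have hcompl : IsCompl (LinearMap.ker (ψ ^ n)) (LinearMap.range (ψ ^ n)) :=
    hn0 n (le_max_left _ _)
  have hn1 : 1 ≤ n := le_max_right _ _
  rcases hM.2 _ _ hcompl with hker | hrange
  · -- ψ^n injective : contradiction with hproper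
    exfalso
    have hψinj : Function.Injective ψ := by
      intro a b hab
      obtain ⟨k, hk⟩ : ∃ k, n = k + 1 := ⟨n - 1, (Nat.succ_pred_eq_of_pos hn1).symm⟩
      have h1 : (ψ ^ n) a = (ψ ^ n) b := by
        rw [hk, pow_succ]
        show (ψ ^ k) (ψ a) = (ψ ^ k) (ψ b)
        rw [hab]
      have h2 : (ψ ^ n) (a - b) = 0 := by rw [map_sub, h1, sub_self]
      have h3 : a - b ∈ LinearMap.ker (ψ ^ n) := h2
      rw [hker] at h3
      exact sub_eq_zero.mp h3
    have hginj : Function.Injective g := by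
      intro a b hab
      apply hψinj
      show h₀ (g a) = h₀ (g b)
      rw [hab]
    apply hproper
    intro a b hab
    apply hginj
    apply huinj
    rw [hug, hug, hab]
  · -- ψ^n = 0 : split
    have hψn : (ψ ^ n) = 0 := LinearMap.range_eq_bot.mp hrange
    set S : M →ₗ[Λ] M := ∑ i ∈ Finset.range n, (-ψ) ^ i with hS
    have hSinv : (ψ + 1) * S = 1 := by
      have h1 := mul_geom_sum (-ψ : M →ₗ[Λ] M) n
      have h2 : ((-ψ : M →ₗ[Λ] M)) ^ n = 0 := by
        rw [neg_pow, hψn, mul_zero]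
      rw [h2, zero_sub] at h1
      have h3 : (ψ + 1 : M →ₗ[Λ] M) = -(-ψ - 1) := by noncomm_ring
      rw [h3, neg_mul, h1, neg_neg]
    have hSinv' : ∀ m : M, ψ (S m) + S m = m := by
      intro m
      have := congrFun (congrArg (fun g : M →ₗ[Λ] M => g.toFun) hSinv) m
      have h4 : ((ψ + 1) * S) m = ψ (S m) + S m := by
        rw [Module.End.mul_apply]
        show ψ (S m) + (S m) = _
        rfl
      rw [← h4]
      exact this
    have hruSurj : Function.Surjective (r₁ ∘ₗ u) := by
      intro v
      obtain ⟨m, hm⟩ := hgsurj v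
      refine ⟨g (S m), ?_⟩
      show r₁ (u (g (S m))) = v
      rw [hug, hgid (S m)]
      have : g (S m) + g (ψ (S m)) = g m := by
        rw [← map_add]
        rw [show S m + ψ (S m) = m from by rw [add_comm]; exact hSinv' m]
      rw [add_comm (g (S m)), ← map_add] at this ⊢
      rw [show ψ (S m) + S m = m from hSinv' m, hm]
    haveI hUnoeth : IsNoetherian Λ U :=
      isNoetherian_of_surjective g (LinearMap.range_eq_top.mpr hgsurj)
    have hruInj : Function.Injective (r₁ ∘ₗ u) :=
      IsNoetherian.injective_of_surjective_endomorphism (r₁ ∘ₗ u) hruSurj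
    set eU : U ≃ₗ[Λ] U := LinearEquiv.ofBijective (r₁ ∘ₗ u) ⟨hruInj, hruSurj⟩ with heU
    refine ⟨eU.symm.toLinearMap ∘ₗ r₁, ?_⟩
    refine LinearMap.ext fun v => ?_
    show eU.symm (r₁ (u v)) = v
    have h5 : r₁ (u v) = eU v := rfl
    rw [h5]
    exact eU.symm_apply_apply v
end

section
/- (Happel–Ringel) Let Λ be a hereditary artin algebra and T, M indecomposable finite length Λ-modules with Ext^1(T,M) = 0. Then every nonzero homomorphism f: M → T is either injective or surjective. In particular, if T is exceptional (indecomposable with Ext^1(T,T) = 0), then End(T) is a division ring. -/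
set_option synthInstance.maxHeartbeats 1000000 in
theorem hr_key (Λ : Type) [Ring Λ] (hH : IsHereditaryRing Λ)
    (T M : Type) [AddCommGroup T] [Module Λ T] [AddCommGroup M] [Module Λ M]
    (hMfl : IsFiniteLength Λ M)
    (hT : IsIndec Λ T) (hM : IsIndec Λ M) (hext : Ext1Zero Λ T M)
    (P : Type) [AddCommGroup P] [Module Λ P] (hPproj : Module.Projective Λ P)
    (π : P →ₗ[Λ] T) (hπ : Function.Surjective π)
    (f : M →ₗ[Λ] T) (hf : f ≠ 0) : Function.Injective f ∨ Function.Surjective f := by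
  by_contra hc
  push_neg at hc
  obtain ⟨hni, hns⟩ := hc
  classical
  obtain ⟨hNoe, hArt⟩ := isFiniteLength_iff_isNoetherian_isArtinian.mp hMfl
  set K : Submodule Λ M := LinearMap.ker f with hKdef
  set P' : Submodule Λ P := (LinearMap.range f).comap π with hP'def
  have hΩ : LinearMap.ker π ≤ P' := by
    intro x hx
    simp only [hP'def, Submodule.mem_comap, LinearMap.mem_ker.mp hx]
    exact Submodule.zero_mem _
  have hproj : Module.Projective Λ ↥P' := hH P hPproj P'
  -- lift π|P' through f
  obtain ⟨l, hfl⟩ : ∃ l : ↥P' →ₗ[Λ] M, ∀ x : ↥P', f (l x) = π (x : P) := by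
    obtain ⟨l, hl⟩ := Module.projective_lifting_property f.rangeRestrict
      (LinearMap.codRestrict (LinearMap.range f) (π.domRestrict P') (fun x => x.2))
      f.surjective_rangeRestrict
    exact ⟨l, fun x => congrArg Subtype.val (LinearMap.congr_fun hl x)⟩
  -- the map φ : Ω → K
  obtain ⟨φ, hφ⟩ : ∃ φ : ↥(LinearMap.ker π) →ₗ[Λ] ↥K,
      ∀ ω : ↥(LinearMap.ker π), (φ ω : M) = l (Submodule.inclusion hΩ ω) := by
    refine ⟨LinearMap.codRestrict K (l ∘ₗ Submodule.inclusion hΩ) (fun ω => ?_), fun ω => rfl⟩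
    have h1 : f (l (Submodule.inclusion hΩ ω)) = π (ω : P) := hfl _
    rw [hKdef, LinearMap.mem_ker, LinearMap.comp_apply, h1, LinearMap.mem_ker.mp ω.2]
  -- the three auxiliary modules
  set wK : ↥(LinearMap.ker π) →ₗ[Λ] ↥K × P :=
    LinearMap.prod φ (-(LinearMap.ker π).subtype) with hwKdef
  set WK : Submodule Λ (↥K × P) := LinearMap.range wK with hWKdef
  set wX : ↥(LinearMap.ker π) →ₗ[Λ] M × P :=
    LinearMap.prod (K.subtype ∘ₗ φ) (-(LinearMap.ker π).subtype) with hwXdef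
  set WX : Submodule Λ (M × P) := LinearMap.range wX with hWXdef
  obtain ⟨φn, hφn⟩ : ∃ φn : ↥(LinearMap.ker π) →ₗ[Λ] ↥K,
      ∀ ω : ↥(LinearMap.ker π), (φn ω : M) = -(l (Submodule.inclusion hΩ ω)) := by
    refine ⟨LinearMap.codRestrict K (-(K.subtype ∘ₗ φ)) (fun ω => ?_), fun ω => by simp [hφ]⟩
    simpa using neg_mem (φ ω).2
  set w' : ↥(LinearMap.ker π) →ₗ[Λ] ↥K × ↥P' :=
    LinearMap.prod φn (Submodule.inclusion hΩ) with hw'def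
  set W' : Submodule Λ (↥K × ↥P') := LinearMap.range w' with hW'def
  -- the map q : E → T
  obtain ⟨q, hq⟩ : ∃ q : (↥K × P) ⧸ WK →ₗ[Λ] T,
      ∀ z : ↥K × P, q (Submodule.Quotient.mk z) = π z.2 := by
    refine ⟨WK.liftQ (π ∘ₗ LinearMap.snd Λ ↥K P) ?_, fun z => rfl⟩
    rintro x ⟨ω, rfl⟩
    simp [hwKdef, LinearMap.mem_ker.mp ω.2]
  have hqsurj : Function.Surjective q := by
    intro t
    obtain ⟨ρ, hρ⟩ := hπ t
    exact ⟨Submodule.Quotient.mk (0, ρ), by rw [hq]; exact hρ⟩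
  -- the maps a, b on E'
  obtain ⟨b, hb⟩ : ∃ b : (M × P) ⧸ WX →ₗ[Λ] T,
      ∀ z : M × P, b (Submodule.Quotient.mk z) = π z.2 := by
    refine ⟨WX.liftQ (π ∘ₗ LinearMap.snd Λ M P) ?_, fun z => rfl⟩
    rintro x ⟨ω, rfl⟩
    simp [hwXdef, LinearMap.mem_ker.mp ω.2]
  set a : M →ₗ[Λ] (M × P) ⧸ WX := WX.mkQ ∘ₗ LinearMap.inl Λ M P with hadef
  have ha : ∀ m : M, a m = Submodule.Quotient.mk (m, 0) := fun m => rfl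
  have hainj : Function.Injective a := by
    rw [← LinearMap.ker_eq_bot, Submodule.eq_bot_iff]
    intro m hm
    have h1 : ((m, 0) : M × P) ∈ WX := by
      rw [← Submodule.Quotient.mk_eq_zero WX]
      exact hm
    obtain ⟨ω, hω⟩ := h1
    have h2 : -(ω : P) = 0 := congrArg Prod.snd hω
    have hω0 : ω = 0 := Subtype.ext (by simpa using h2)
    have h3 : K.subtype (φ ω) = m := congrArg Prod.fst hω
    rw [hω0] at h3
    simpa using h3.symm
  have hbsurj : Function.Surjective b := by
    intro t
    obtain ⟨ρ, hρ⟩ := hπ t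
    exact ⟨Submodule.Quotient.mk (0, ρ), by rw [hb]; exact hρ⟩
  have hkerb : LinearMap.ker b = LinearMap.range a := by
    apply le_antisymm
    · rintro x hx
      obtain ⟨⟨m, ρ⟩, rfl⟩ := WX.mkQ_surjective x
      rw [Submodule.mkQ_apply] at hx ⊢
      have hπρ : ρ ∈ LinearMap.ker π := by
        rw [LinearMap.mem_ker]
        have := LinearMap.mem_ker.mp hx
        rw [hb] at this
        exact this
      refine ⟨m + l (Submodule.inclusion hΩ ⟨ρ, hπρ⟩), ?_⟩
      rw [ha, Submodule.Quotient.eq]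
      refine ⟨⟨ρ, hπρ⟩, ?_⟩
      have : (wX ⟨ρ, hπρ⟩ : M × P) =
          (l (Submodule.inclusion hΩ ⟨ρ, hπρ⟩), -ρ) := by
        simp [hwXdef, hφ]
      rw [this, Prod.mk_sub_mk]
      refine Prod.ext ?_ ?_ <;> simp
    · rintro x ⟨m, rfl⟩
      rw [LinearMap.mem_ker, ha, hb]
      simp
  -- split the sequence 0 → M → E' → T → 0
  obtain ⟨r, hr⟩ := hext _ a b hainj hbsurj hkerb
  have hra : ∀ m : M, r (a m) = m := fun m => LinearMap.congr_fun hr m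
  -- the module E_eta and the isomorphism θ : E_eta ≃ M
  obtain ⟨θ, hθ⟩ : ∃ θ : (↥K × ↥P') ⧸ W' →ₗ[Λ] M,
      ∀ z : ↥K × ↥P', θ (Submodule.Quotient.mk z) = (z.1 : M) + l z.2 := by
    refine ⟨W'.liftQ (K.subtype ∘ₗ LinearMap.fst Λ ↥K ↥P' + l ∘ₗ LinearMap.snd Λ ↥K ↥P') ?_,
      fun z => rfl⟩
    rintro x ⟨ω, rfl⟩
    simp [hw'def, hφn]
  have hθsurj : Function.Surjective θ := by
    intro m
    obtain ⟨ρ, hρ⟩ := hπ (f m)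
    have hρP' : ρ ∈ P' := by
      rw [hP'def, Submodule.mem_comap, hρ]
      exact LinearMap.mem_range_self f m
    have hmem : m - l ⟨ρ, hρP'⟩ ∈ K := by
      rw [hKdef, LinearMap.mem_ker, map_sub, hfl ⟨ρ, hρP'⟩, hρ, sub_self]
    refine ⟨Submodule.Quotient.mk (⟨m - l ⟨ρ, hρP'⟩, hmem⟩, ⟨ρ, hρP'⟩), ?_⟩
    rw [hθ]
    simp
  have hθinj : Function.Injective θ := by
    rw [← LinearMap.ker_eq_bot, Submodule.eq_bot_iff]
    intro x hx
    obtain ⟨⟨κ, ρ'⟩, rfl⟩ := W'.mkQ_surjective x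
    rw [Submodule.mkQ_apply] at hx ⊢
    have h0 : (κ : M) + l ρ' = 0 := by rw [LinearMap.mem_ker, hθ] at hx; exact hx
    have hρ'Ω : (ρ' : P) ∈ LinearMap.ker π := by
      rw [LinearMap.mem_ker, ← hfl ρ']
      have : f ((κ : M) + l ρ') = 0 := by rw [h0, map_zero]
      rw [map_add, LinearMap.mem_ker.mp κ.2, zero_add] at this
      exact this
    rw [Submodule.Quotient.mk_eq_zero]
    refine ⟨⟨(ρ' : P), hρ'Ω⟩, ?_⟩
    have hι : Submodule.inclusion hΩ ⟨(ρ' : P), hρ'Ω⟩ = ρ' := by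
      apply Subtype.ext; rfl
    refine Prod.ext ?_ ?_
    · show φn ⟨(ρ' : P), hρ'Ω⟩ = κ
      apply Subtype.ext
      rw [hφn, hι]
      exact neg_eq_of_add_eq_zero_right (by rw [add_comm]; exact h0)
    · show Submodule.inclusion hΩ ⟨(ρ' : P), hρ'Ω⟩ = ρ'
      exact hι
  -- the map g : M → E
  obtain ⟨g1, hg1⟩ : ∃ g1 : (↥K × ↥P') ⧸ W' →ₗ[Λ] (↥K × P) ⧸ WK,
      ∀ z : ↥K × ↥P', g1 (Submodule.Quotient.mk z)
        = Submodule.Quotient.mk (z.1, (z.2 : P)) := by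
    refine ⟨W'.liftQ (WK.mkQ ∘ₗ (LinearMap.prodMap LinearMap.id P'.subtype)) ?_, fun z => rfl⟩
    rintro x ⟨ω, rfl⟩
    rw [LinearMap.mem_ker, LinearMap.comp_apply]
    rw [Submodule.mkQ_apply, Submodule.Quotient.mk_eq_zero]
    refine ⟨-ω, ?_⟩
    rw [hwKdef]
    refine Prod.ext ?_ ?_
    · show φ (-ω) = (w' ω).1
      apply Subtype.ext
      rw [hw'def]
      show ((φ (-ω) : M)) = (φn ω : M)
      rw [map_neg, hφn]
      simp [hφ]
    · show -(((-ω : ↥(LinearMap.ker π)) : P)) = ((w' ω).2 : P)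
      simp [hw'def]
  set θe : ((↥K × ↥P') ⧸ W') ≃ₗ[Λ] M := LinearEquiv.ofBijective θ ⟨hθinj, hθsurj⟩ with hθedef
  set g : M →ₗ[Λ] (↥K × P) ⧸ WK := g1 ∘ₗ (θe.symm : M →ₗ[Λ] (↥K × ↥P') ⧸ W')
    with hgdef
  have hθe : ∀ x, θe x = θ x := fun x => rfl
  -- g on K is the canonical inclusion
  have hgK : ∀ κ : ↥K, g (κ : M) = Submodule.Quotient.mk (κ, 0) := by
    intro κ
    have h1 : θe.symm (κ : M) = Submodule.Quotient.mk (κ, 0) := by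
      rw [LinearEquiv.symm_apply_eq, hθe, hθ]
      simp
    rw [hgdef]
    show g1 (θe.symm (κ : M)) = _
    rw [h1, hg1]
    rfl
  -- q ∘ g = f
  have hqg : ∀ m : M, q (g m) = f m := by
    intro m
    obtain ⟨⟨κ, ρ'⟩, hz⟩ := W'.mkQ_surjective (θe.symm m)
    rw [Submodule.mkQ_apply] at hz
    have hm : (κ : M) + l ρ' = m := by
      have h2 : θ (Submodule.Quotient.mk (κ, ρ')) = m := by
        rw [← hθe, hz]; exact θe.apply_symm_apply m
      rw [hθ] at h2
      exact h2
    show q (g1 (θe.symm m)) = f m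
    rw [← hz, hg1, hq]
    rw [← hm, map_add, LinearMap.mem_ker.mp κ.2, zero_add, hfl]
  -- the map u : E → E'
  obtain ⟨u, hu⟩ : ∃ u : (↥K × P) ⧸ WK →ₗ[Λ] (M × P) ⧸ WX,
      ∀ z : ↥K × P, u (Submodule.Quotient.mk z)
        = Submodule.Quotient.mk ((z.1 : M), z.2) := by
    refine ⟨WK.liftQ (WX.mkQ ∘ₗ (LinearMap.prodMap K.subtype LinearMap.id)) ?_, fun z => rfl⟩
    rintro x ⟨ω, rfl⟩
    rw [LinearMap.mem_ker, LinearMap.comp_apply, Submodule.mkQ_apply,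
      Submodule.Quotient.mk_eq_zero]
    exact ⟨ω, rfl⟩
  -- the endomorphism t = r ∘ u ∘ g of M
  obtain ⟨t, ht⟩ : ∃ t : M →ₗ[Λ] M, ∀ m : M, t m = r (u (g m)) :=
    ⟨r ∘ₗ u ∘ₗ g, fun _ => rfl⟩
  have htK : ∀ κ : ↥K, t (κ : M) = (κ : M) := by
    intro κ
    rw [ht, hgK, hu]
    exact hra _
  -- a nonzero element of the kernel of f
  have hKne : LinearMap.ker f ≠ ⊥ := fun h => hni (LinearMap.ker_eq_bot.mp h)
  obtain ⟨κ0, hκ0K, hκ00⟩ := (Submodule.ne_bot_iff _).mp hKne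
  have hκ0K' : κ0 ∈ K := hκ0K
  have htpow : ∀ k : ℕ, (t ^ k) κ0 = κ0 := by
    intro k
    induction k with
    | zero => rfl
    | succ k ih =>
      rw [pow_succ, Module.End.mul_apply, htK ⟨κ0, hκ0K'⟩] at *
      exact ih
  -- Fitting's lemma
  obtain ⟨n, hn⟩ := Filter.eventually_atTop.mp (t.eventually_isCompl_ker_pow_range_pow)
  have hcompl := hn (n + 1) (Nat.le_succ n)
  rcases hM.2 _ _ hcompl with hker | hrange
  · -- t is injective, hence bijective
    have hle : LinearMap.ker t ≤ LinearMap.ker (t ^ (n + 1)) := by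
      rw [pow_succ, Module.End.mul_eq_comp]
      exact LinearMap.ker_le_ker_comp t (t ^ n)
    have htinj : Function.Injective t := by
      rw [← LinearMap.ker_eq_bot]
      exact le_bot_iff.mp (hker ▸ hle)
    have htbij : Function.Bijective t := IsArtinian.bijective_of_injective_endomorphism t htinj
    set te : M ≃ₗ[Λ] M := LinearEquiv.ofBijective t htbij with htedef
    obtain ⟨s', hs'⟩ : ∃ s' : (↥K × P) ⧸ WK →ₗ[Λ] M,
        ∀ x, s' x = te.symm (r (u x)) :=
      ⟨(te.symm : M →ₗ[Λ] M) ∘ₗ (r ∘ₗ u), fun _ => rfl⟩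
    have hs'g : ∀ m : M, s' (g m) = m := by
      intro m
      rw [hs', ← ht m]
      exact te.symm_apply_apply m
    set G : Submodule Λ ((↥K × P) ⧸ WK) := LinearMap.range g with hGdef
    set D : Submodule Λ ((↥K × P) ⧸ WK) := LinearMap.ker s' with hDdef
    have hGD : IsCompl G D := by
      constructor
      · rw [disjoint_iff_inf_le]
        rintro x ⟨⟨m, rfl⟩, hxD⟩
        have hm0 : m = 0 := by
          rw [← hs'g m]
          exact LinearMap.mem_ker.mp hxD
        rw [hm0, map_zero]
        exact Submodule.zero_mem ⊥
      · rw [codisjoint_iff, eq_top_iff]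
        intro x _
        rw [Submodule.mem_sup]
        refine ⟨g (s' x), ⟨s' x, rfl⟩, x - g (s' x), ?_, by abel⟩
        rw [hDdef, LinearMap.mem_ker, map_sub, hs'g, sub_self]
    have hkerq : LinearMap.ker q ≤ G := by
      intro x hx
      obtain ⟨⟨κ, ρ⟩, rfl⟩ := WK.mkQ_surjective x
      rw [Submodule.mkQ_apply] at hx ⊢
      have hπρ : ρ ∈ LinearMap.ker π := by
        rw [LinearMap.mem_ker]
        have h1 := LinearMap.mem_ker.mp hx
        rw [hq] at h1
        exact h1
      refine ⟨(κ : M) + l (Submodule.inclusion hΩ ⟨ρ, hπρ⟩), ?_⟩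
      have hsymm : θe.symm ((κ : M) + l (Submodule.inclusion hΩ ⟨ρ, hπρ⟩))
          = Submodule.Quotient.mk (κ, Submodule.inclusion hΩ ⟨ρ, hπρ⟩) := by
        rw [LinearEquiv.symm_apply_eq, hθe, hθ]
      show g1 (θe.symm _) = _
      rw [hsymm, hg1]
      rfl
    have hqgcomp : LinearMap.range f = Submodule.map q G := by
      rw [hGdef, ← LinearMap.range_comp]
      have : q ∘ₗ g = f := LinearMap.ext fun m => hqg m
      rw [this]
    set J : Submodule Λ T := Submodule.map q D with hJdef
    have hIJ : IsCompl (LinearMap.range f) J := by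
      constructor
      · rw [disjoint_iff_inf_le]
        rintro x ⟨⟨m, rfl⟩, hxJ⟩
        obtain ⟨d, hdD, hdq⟩ := hxJ
        have h1 : q (d - g m) = 0 := by
          rw [map_sub, hdq, hqg m, sub_self]
        have h2 : d - g m ∈ G := hkerq (LinearMap.mem_ker.mpr h1)
        have h3 : d ∈ G := by
          obtain ⟨m', hm'⟩ := h2
          exact ⟨m' + m, by rw [map_add, hm']; abel⟩
        have h4 : d = 0 := Submodule.disjoint_def.mp hGD.disjoint d h3 hdD
        rw [Submodule.mem_bot, ← hdq, h4, map_zero]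
      · rw [codisjoint_iff, hqgcomp, hJdef, ← Submodule.map_sup,
          codisjoint_iff.mp hGD.codisjoint, Submodule.map_top]
        exact LinearMap.range_eq_top.mpr hqsurj
    rcases hT.2 _ _ hIJ with h1 | h2
    · exact hf (LinearMap.range_eq_bot.mp h1)
    · apply hns
      rw [← LinearMap.range_eq_top]
      have h6 := codisjoint_iff.mp hIJ.codisjoint
      rw [h2, sup_bot_eq] at h6
      exact h6
  · -- t is nilpotent-like : contradiction with κ0
    have h7 : κ0 ∈ LinearMap.range (t ^ (n + 1)) := ⟨κ0, htpow (n + 1)⟩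
    rw [hrange, Submodule.mem_bot] at h7
    exact hκ00 h7

/-- **Happel–Ringel.**  Over a hereditary artin algebra, if `T`, `M` are
indecomposable with `Ext¹(T, M) = 0`, then every nonzero `f : M → T` is
injective or surjective.  In particular if `T` is exceptional then `End(T)`
is a division ring (every nonzero endomorphism is a unit). -/
theorem happel_ringel (Λ : Type) [Ring Λ] [IsArtinianRing Λ]
    (hH : IsHereditaryRing Λ)
    (T M : Type) [AddCommGroup T] [Module Λ T] [AddCommGroup M] [Module Λ M]
    (hTfl : IsFiniteLength Λ T) (hMfl : IsFiniteLength Λ M)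
    (hT : IsIndec Λ T) (hM : IsIndec Λ M) (hext : Ext1Zero Λ T M) :
    (∀ f : M →ₗ[Λ] T, f ≠ 0 → Function.Injective f ∨ Function.Surjective f) ∧
    (Ext1Zero Λ T T → ∀ g : Module.End Λ T, g ≠ 0 → IsUnit g) := by
  have key : ∀ (M' : Type) [AddCommGroup M'] [Module Λ M'], ∀ _ : IsFiniteLength Λ M',
      ∀ _ : IsIndec Λ M', ∀ _ : Ext1Zero Λ T M', ∀ f : M' →ₗ[Λ] T, f ≠ 0 →
      Function.Injective f ∨ Function.Surjective f := by
    intro M' _ _ hfl hind hextM f hf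
    exact hr_key Λ hH T M' hfl hT hind hextM (T →₀ Λ) inferInstance
      (Finsupp.linearCombination Λ _root_.id) (Finsupp.linearCombination_id_surjective Λ T)
      f hf
  refine ⟨key M hMfl hM hext, fun hTT g hg => ?_⟩
  obtain ⟨hNoeT, hArtT⟩ := isFiniteLength_iff_isNoetherian_isArtinian.mp hTfl
  rw [Module.End.isUnit_iff]
  rcases key T hTfl hT hTT g hg with h | h
  · exact ⟨h, IsArtinian.surjective_of_injective_endomorphism g h⟩
  · exact ⟨IsNoetherian.injective_of_surjective_endomorphism g h, h⟩
end

section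
/- (Bongartz) Let Λ be a hereditary artin algebra and T a rigid Λ-module. Let 0 → Λ → E → T' → 0 be the universal add(T)-coextension of Λ (so that the connecting map Hom(T, T') → Ext^1(T, Λ) is surjective). Then T ⊕ E is a tilting module. -/
/-- A tilting module: rigid, with a length-one `add U`-coresolution
`0 → Λ → U^k → Q → 0` of the regular module, `Q ∈ add U`. -/
def IsTiltingModule (Λ : Type) [Ring Λ] (U : Type) [AddCommGroup U] [Module Λ U] : Prop :=
  Ext1Zero Λ U U ∧ ∃ (k : ℕ) (f : Λ →ₗ[Λ] (Fin k → U)), Function.Injective f ∧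
    InAdd Λ U ((Fin k → U) ⧸ LinearMap.range f)

open LinearMap Submodule Function

section Sec0
variable {R A B F : Type} [Ring R] [AddCommGroup A] [Module R A] [AddCommGroup B] [Module R B]
  [AddCommGroup F] [Module R F]

theorem my_retr_of_sec
    (i : B →ₗ[R] F) (p : F →ₗ[R] A) (hi : Function.Injective i)
    (hexact : LinearMap.ker p = LinearMap.range i)
    (s : A →ₗ[R] F) (hs : p ∘ₗ s = LinearMap.id) :
    ∃ r : F →ₗ[R] B, r ∘ₗ i = LinearMap.id := by
  have hps : ∀ a, p (s a) = a := fun a => by simpa using LinearMap.ext_iff.mp hs a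
  have hpi : ∀ b, p (i b) = 0 := fun b => by
    have : i b ∈ LinearMap.ker p := by rw [hexact]; exact ⟨b, rfl⟩
    simpa using this
  have hmem : ∀ x : F, ((LinearMap.id : F →ₗ[R] F) - s ∘ₗ p) x ∈ LinearMap.range i := by
    intro x
    rw [← hexact, LinearMap.mem_ker]
    simp [hps]
  set g : F →ₗ[R] ↥(LinearMap.range i) :=
    LinearMap.codRestrict (LinearMap.range i) ((LinearMap.id : F →ₗ[R] F) - s ∘ₗ p) hmem with hg
  set e := LinearEquiv.ofInjective i hi with he
  refine ⟨e.symm.toLinearMap ∘ₗ g, LinearMap.ext fun b => ?_⟩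
  have h1 : g (i b) = e b := by
    apply Subtype.ext
    simp [hg, he, hpi b, LinearEquiv.ofInjective_apply]
  simp [LinearMap.comp_apply, h1]

theorem my_sec_of_retr
    (i : B →ₗ[R] F) (p : F →ₗ[R] A) (hp : Function.Surjective p)
    (hexact : LinearMap.ker p = LinearMap.range i)
    (r : F →ₗ[R] B) (hr : r ∘ₗ i = LinearMap.id) :
    ∃ s : A →ₗ[R] F, p ∘ₗ s = LinearMap.id := by
  have hri : ∀ b, r (i b) = b := fun b => by simpa using LinearMap.ext_iff.mp hr b
  have hpi : ∀ b, p (i b) = 0 := fun b => by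
    have : i b ∈ LinearMap.ker p := by rw [hexact]; exact ⟨b, rfl⟩
    simpa using this
  set q : F →ₗ[R] F := (LinearMap.id : F →ₗ[R] F) - i ∘ₗ r with hq
  have hq0 : LinearMap.ker p ≤ LinearMap.ker q := by
    intro x hx
    rw [hexact] at hx
    obtain ⟨b, rfl⟩ := hx
    simp [hq, hri]
  set ql : (F ⧸ LinearMap.ker p) →ₗ[R] F := Submodule.liftQ _ q hq0 with hql
  set pbar : (F ⧸ LinearMap.ker p) →ₗ[R] A := Submodule.liftQ _ p le_rfl with hpbar
  have hpbar_inj : Function.Injective pbar := by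
    rw [← LinearMap.ker_eq_bot, hpbar, Submodule.ker_liftQ_eq_bot _ _ _ le_rfl]
  have hpbar_surj : Function.Surjective pbar := by
    intro a
    obtain ⟨x, rfl⟩ := hp a
    exact ⟨Submodule.Quotient.mk x, rfl⟩
  set e := LinearEquiv.ofBijective pbar ⟨hpbar_inj, hpbar_surj⟩ with he
  refine ⟨ql ∘ₗ e.symm.toLinearMap, LinearMap.ext fun a => ?_⟩
  have key : p ∘ₗ ql = pbar := by
    apply Submodule.linearMap_qext
    refine LinearMap.ext fun x => ?_
    simp [hql, hq, hpbar, hpi]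
  have : p (ql (e.symm a)) = pbar (e.symm a) := LinearMap.ext_iff.mp key _
  have h2 : pbar (e.symm a) = a := e.apply_symm_apply a
  simp [LinearMap.comp_apply, this, h2]

end Sec0

section Sec1
variable {R A A' B B' F : Type} [Ring R] [AddCommGroup A] [Module R A] [AddCommGroup B] [Module R B]
  [AddCommGroup F] [Module R F] [AddCommGroup A'] [Module R A'] [AddCommGroup B'] [Module R B']

theorem my_lift_of_ext
    (i : B →ₗ[R] F) (p : F →ₗ[R] A) (hi : Function.Injective i) (hp : Function.Surjective p)
    (hexact : LinearMap.ker p = LinearMap.range i)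
    (g : A' →ₗ[R] A) (hext : Ext1Zero R A' B) :
    ∃ t : A' →ₗ[R] F, p ∘ₗ t = g := by
  have hpi : ∀ b, p (i b) = 0 := fun b => by
    have : i b ∈ LinearMap.ker p := by rw [hexact]; exact ⟨b, rfl⟩
    simpa using this
  set d : F × A' →ₗ[R] A := p ∘ₗ LinearMap.fst R F A' - g ∘ₗ LinearMap.snd R F A' with hd
  set G : Submodule R (F × A') := LinearMap.ker d with hG
  have hGmem : ∀ z : F × A', z ∈ G ↔ p z.1 - g z.2 = 0 := by
    intro z
    rw [hG, LinearMap.mem_ker, hd]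
    simp
  set i' : B →ₗ[R] ↥G := LinearMap.codRestrict G (LinearMap.prod i 0)
    (fun b => by rw [hGmem]; simp [hpi]) with hi'def
  set p' : ↥G →ₗ[R] A' := LinearMap.snd R F A' ∘ₗ G.subtype with hp'def
  have hcoe : ∀ b, ((i' b : ↥G) : F × A') = (i b, 0) := fun b => rfl
  have hi' : Function.Injective i' := by
    intro b₁ b₂ h
    have h2 : ((i' b₁ : ↥G) : F × A') = ((i' b₂ : ↥G) : F × A') := congrArg _ h
    rw [hcoe, hcoe, Prod.ext_iff] at h2
    exact hi h2.1
  have hp' : Function.Surjective p' := by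
    intro a'
    obtain ⟨x, hx⟩ := hp (g a')
    exact ⟨⟨(x, a'), by rw [hGmem]; simp [hx]⟩, rfl⟩
  have hex' : LinearMap.ker p' = LinearMap.range i' := by
    ext z
    simp only [LinearMap.mem_ker, LinearMap.mem_range]
    constructor
    · intro hz
      have hz2 : ((z : ↥G) : F × A').2 = 0 := hz
      have hzd : p ((z : ↥G) : F × A').1 - g ((z : ↥G) : F × A').2 = 0 := (hGmem _).mp z.2
      rw [hz2] at hzd
      simp only [map_zero, sub_zero] at hzd
      have : ((z : ↥G) : F × A').1 ∈ LinearMap.range i := by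
        rw [← hexact]; simpa using hzd
      obtain ⟨b, hb⟩ := this
      refine ⟨b, Subtype.ext ?_⟩
      rw [hcoe, Prod.ext_iff]
      exact ⟨hb, hz2.symm⟩
    · rintro ⟨b, rfl⟩
      rfl
  obtain ⟨r', hr'⟩ := hext (↥G) i' p' hi' hp' hex'
  obtain ⟨s', hs'⟩ := my_sec_of_retr i' p' hp' hex' r' hr'
  refine ⟨LinearMap.fst R F A' ∘ₗ G.subtype ∘ₗ s', LinearMap.ext fun a' => ?_⟩
  have h1 : p ((s' a' : ↥G) : F × A').1 - g ((s' a' : ↥G) : F × A').2 = 0 := (hGmem _).mp (s' a').2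
  have h2 : ((s' a' : ↥G) : F × A').2 = a' := by
    have := LinearMap.ext_iff.mp hs' a'
    simpa [hp'def] using this
  rw [h2] at h1
  have h3 : p ((s' a' : ↥G) : F × A').1 = g a' := sub_eq_zero.mp h1
  simpa [LinearMap.comp_apply] using h3

theorem my_extend_of_ext
    (i : B →ₗ[R] F) (p : F →ₗ[R] A) (hi : Function.Injective i) (hp : Function.Surjective p)
    (hexact : LinearMap.ker p = LinearMap.range i)
    (g : B →ₗ[R] B') (hext : Ext1Zero R A B') :
    ∃ t : F →ₗ[R] B', t ∘ₗ i = g := by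
  have hpi : ∀ b, p (i b) = 0 := fun b => by
    have : i b ∈ LinearMap.ker p := by rw [hexact]; exact ⟨b, rfl⟩
    simpa using this
  set N : Submodule R (B' × F) := LinearMap.range (LinearMap.prod (-g) i) with hN
  have hNmem : ∀ z : B' × F, z ∈ N ↔ ∃ b, (-(g b), i b) = z := by
    intro z
    rw [hN, LinearMap.mem_range]
    constructor
    · rintro ⟨b, rfl⟩; exact ⟨b, rfl⟩
    · rintro ⟨b, rfl⟩; exact ⟨b, rfl⟩
  set i' : B' →ₗ[R] ((B' × F) ⧸ N) := N.mkQ ∘ₗ LinearMap.inl R B' F with hi'def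
  have hNker : N ≤ LinearMap.ker (p ∘ₗ LinearMap.snd R B' F) := by
    rintro z hz
    obtain ⟨b, rfl⟩ := (hNmem z).mp hz
    simp [LinearMap.mem_ker, hpi]
  set p' : ((B' × F) ⧸ N) →ₗ[R] A := Submodule.liftQ N (p ∘ₗ LinearMap.snd R B' F) hNker with hp'def
  have hmkeq : ∀ z w : B' × F, z - w ∈ N → N.mkQ z = N.mkQ w := by
    intro z w h
    rw [Submodule.mkQ_apply, Submodule.mkQ_apply, Submodule.Quotient.eq]
    exact h
  have hi' : Function.Injective i' := by
    intro b₁ b₂ h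
    have h' : ((b₁, (0:F)) - (b₂, 0)) ∈ N := by
      rw [← Submodule.Quotient.eq]
      simpa [hi'def, Submodule.mkQ_apply] using h
    obtain ⟨b, hb⟩ := (hNmem _).mp h'
    rw [Prod.ext_iff] at hb
    have hb2 : i b = 0 := by simpa using hb.2
    have hb0 : b = 0 := hi (by simpa using hb2)
    have hb1 := hb.1
    rw [hb0] at hb1
    simp at hb1
    exact sub_eq_zero.mp hb1.symm
  have hp' : Function.Surjective p' := by
    intro a
    obtain ⟨x, hx⟩ := hp a
    exact ⟨N.mkQ (0, x), by simpa [hp'def] using hx⟩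
  have hex' : LinearMap.ker p' = LinearMap.range i' := by
    ext z
    simp only [LinearMap.mem_ker, LinearMap.mem_range]
    constructor
    · intro hz
      obtain ⟨⟨b', x⟩, rfl⟩ := N.mkQ_surjective z
      have hx : p x = 0 := by simpa [hp'def] using hz
      have : x ∈ LinearMap.range i := by rw [← hexact]; simpa using hx
      obtain ⟨b, hb⟩ := this
      refine ⟨b' + g b, ?_⟩
      rw [hi'def]
      simp only [LinearMap.comp_apply, LinearMap.inl_apply]
      apply hmkeq
      rw [hNmem]
      exact ⟨-b, by simp [hb, Prod.ext_iff]⟩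
    · rintro ⟨b', rfl⟩
      simp [hp'def, hi'def]
  obtain ⟨r', hr'⟩ := hext _ i' p' hi' hp' hex'
  refine ⟨r' ∘ₗ N.mkQ ∘ₗ LinearMap.inr R B' F, LinearMap.ext fun b => ?_⟩
  have key : N.mkQ (0, i b) = i' (g b) := by
    rw [hi'def]
    simp only [LinearMap.comp_apply, LinearMap.inl_apply]
    apply hmkeq
    rw [hNmem]
    exact ⟨b, by simp [Prod.ext_iff]⟩
  have hr'b : r' (i' (g b)) = g b := by simpa using LinearMap.ext_iff.mp hr' (g b)
  simp only [LinearMap.comp_apply, LinearMap.inr_apply]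
  rw [key, hr'b]

end Sec1

section Sec2
variable {R A A' B B' F : Type} [Ring R] [AddCommGroup A] [Module R A] [AddCommGroup B] [Module R B]
  [AddCommGroup F] [Module R F] [AddCommGroup A'] [Module R A'] [AddCommGroup B'] [Module R B']

theorem my_ext_ring (B : Type) [AddCommGroup B] [Module R B] : Ext1Zero R R B := by
  intro F _ _ i p hi hp hexact
  obtain ⟨e, he⟩ := hp 1
  have hs : p ∘ₗ LinearMap.toSpanSingleton R F e = LinearMap.id := by
    refine LinearMap.ext fun a => ?_
    simp [LinearMap.toSpanSingleton_apply, he, smul_eq_mul]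
  exact my_retr_of_sec i p hi hexact _ hs

theorem my_ext_prod_fst (hA : Ext1Zero R A B) (hA' : Ext1Zero R A' B) :
    Ext1Zero R (A × A') B := by
  intro F _ _ i p hi hp hexact
  obtain ⟨t₁, ht₁⟩ := my_lift_of_ext i p hi hp hexact (LinearMap.inl R A A') hA
  obtain ⟨t₂, ht₂⟩ := my_lift_of_ext i p hi hp hexact (LinearMap.inr R A A') hA'
  have hs : p ∘ₗ (t₁ ∘ₗ LinearMap.fst R A A' + t₂ ∘ₗ LinearMap.snd R A A') = LinearMap.id := by
    refine LinearMap.ext fun z => ?_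
    have h1 : p (t₁ z.1) = (z.1, 0) := LinearMap.ext_iff.mp ht₁ z.1
    have h2 : p (t₂ z.2) = (0, z.2) := LinearMap.ext_iff.mp ht₂ z.2
    simp [LinearMap.comp_apply, h1, h2, Prod.ext_iff]
  exact my_retr_of_sec i p hi hexact _ hs

theorem my_ext_prod_snd (hB : Ext1Zero R A B) (hB' : Ext1Zero R A B') :
    Ext1Zero R A (B × B') := by
  intro F _ _ i p hi hp hexact
  obtain ⟨t₁, ht₁⟩ := my_extend_of_ext i p hi hp hexact (LinearMap.fst R B B') hB
  obtain ⟨t₂, ht₂⟩ := my_extend_of_ext i p hi hp hexact (LinearMap.snd R B B') hB'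
  refine ⟨LinearMap.prod t₁ t₂, LinearMap.ext fun z => ?_⟩
  have h1 : t₁ (i z) = z.1 := LinearMap.ext_iff.mp ht₁ z
  have h2 : t₂ (i z) = z.2 := LinearMap.ext_iff.mp ht₂ z
  simp [LinearMap.comp_apply, LinearMap.prod_apply, h1, h2]

theorem my_ext_pow_fst (n : ℕ) (hA : Ext1Zero R A B) : Ext1Zero R (Fin n → A) B := by
  intro F _ _ i p hi hp hexact
  have hts : ∀ k : Fin n, ∃ t : A →ₗ[R] F, p ∘ₗ t = LinearMap.single R (fun _ : Fin n => A) k :=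
    fun k => my_lift_of_ext i p hi hp hexact _ hA
  choose t ht using hts
  have hs : p ∘ₗ (∑ k : Fin n, t k ∘ₗ LinearMap.proj k) = LinearMap.id := by
    refine LinearMap.ext fun g => ?_
    have : ∀ k, p (t k (g k)) = Pi.single k (g k) := fun k => by
      have := LinearMap.ext_iff.mp (ht k) (g k)
      simpa using this
    simp only [LinearMap.comp_apply, LinearMap.sum_apply, map_sum, LinearMap.proj_apply, this,
      LinearMap.id_apply]
    exact Finset.univ_sum_single g
  exact my_retr_of_sec i p hi hexact _ hs

theorem my_ext_pow_snd (n : ℕ) (hB : Ext1Zero R A B) : Ext1Zero R A (Fin n → B) := by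
  intro F _ _ i p hi hp hexact
  have hts : ∀ k : Fin n, ∃ t : F →ₗ[R] B, t ∘ₗ i = LinearMap.proj k :=
    fun k => my_extend_of_ext i p hi hp hexact _ hB
  choose t ht using hts
  refine ⟨LinearMap.pi t, LinearMap.ext fun g => ?_⟩
  refine funext fun k => ?_
  have := LinearMap.ext_iff.mp (ht k) g
  simpa using this

theorem my_ext_summand_fst (hA : Ext1Zero R A B) (h : IsSummand R A' A) : Ext1Zero R A' B := by
  obtain ⟨ι, π, hπι⟩ := h
  intro F _ _ i p hi hp hexact
  obtain ⟨t, ht⟩ := my_lift_of_ext i p hi hp hexact π hA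
  have hs : p ∘ₗ (t ∘ₗ ι) = LinearMap.id := by
    rw [← LinearMap.comp_assoc, ht, hπι]
  exact my_retr_of_sec i p hi hexact _ hs

theorem my_ext_summand_snd (hB : Ext1Zero R A B) (h : IsSummand R B' B) : Ext1Zero R A B' := by
  obtain ⟨ι, π, hπι⟩ := h
  intro F _ _ i p hi hp hexact
  obtain ⟨t, ht⟩ := my_extend_of_ext i p hi hp hexact ι hB
  refine ⟨π ∘ₗ t, ?_⟩
  rw [LinearMap.comp_assoc, ht, hπι]

end Sec2

section Sec3
variable {R A B C X F : Type} [Ring R] [AddCommGroup A] [Module R A] [AddCommGroup B] [Module R B]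
  [AddCommGroup F] [Module R F] [AddCommGroup C] [Module R C] [AddCommGroup X] [Module R X]

theorem my_ext_extension_fst
    (a : A →ₗ[R] B) (b : B →ₗ[R] C) (ha : Function.Injective a) (hb : Function.Surjective b)
    (hab : LinearMap.ker b = LinearMap.range a)
    (hA : Ext1Zero R A X) (hC : Ext1Zero R C X) : Ext1Zero R B X := by
  intro F _ _ u q hu hq hker
  have hba : ∀ α, b (a α) = 0 := fun α => by
    have : a α ∈ LinearMap.ker b := by rw [hab]; exact ⟨α, rfl⟩
    simpa using this
  have hqu : ∀ x, q (u x) = 0 := fun x => by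
    have : u x ∈ LinearMap.ker q := by rw [hker]; exact ⟨x, rfl⟩
    simpa using this
  -- F₀ = q⁻¹(range a)
  set F₀ : Submodule R F := Submodule.comap q (LinearMap.range a) with hF₀
  set ea := LinearEquiv.ofInjective a ha with hea
  set i₀ : X →ₗ[R] ↥F₀ := LinearMap.codRestrict F₀ u
    (fun x => by simp [hF₀, Submodule.mem_comap, hqu x, Submodule.zero_mem]) with hi₀
  set q₀ : ↥F₀ →ₗ[R] A := ea.symm.toLinearMap ∘ₗ
    LinearMap.codRestrict (LinearMap.range a) (q ∘ₗ F₀.subtype) (fun f => f.2) with hq₀def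
  have hcoe : ∀ α, ((ea α : ↥(LinearMap.range a)) : B) = a α := fun α => by
    rw [hea]; exact LinearEquiv.ofInjective_apply a α
  have hsym : ∀ y : ↥(LinearMap.range a), a (ea.symm y) = (y : B) := by
    intro y
    rw [← hcoe (ea.symm y), ea.apply_symm_apply]
  have haq₀ : ∀ f : ↥F₀, a (q₀ f) = q (f : F) := by
    intro f
    rw [hq₀def]
    simp only [LinearMap.comp_apply, LinearEquiv.coe_coe]
    rw [hsym]
    rfl
  have hi₀inj : Function.Injective i₀ := by
    intro x₁ x₂ h
    exact hu (congrArg (fun z : ↥F₀ => (z : F)) h)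
  have hq₀surj : Function.Surjective q₀ := by
    intro α
    obtain ⟨f, hf⟩ := hq (a α)
    have hfF₀ : f ∈ F₀ := by simp [hF₀, Submodule.mem_comap, hf]
    refine ⟨⟨f, hfF₀⟩, ha ?_⟩
    rw [haq₀]
    exact hf
  have hexact₀ : LinearMap.ker q₀ = LinearMap.range i₀ := by
    ext f
    simp only [LinearMap.mem_ker, LinearMap.mem_range]
    constructor
    · intro hf
      have : q (f : F) = 0 := by rw [← haq₀, hf, map_zero]
      have : (f : F) ∈ LinearMap.range u := by rw [← hker]; simpa using this
      obtain ⟨x, hx⟩ := this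
      exact ⟨x, Subtype.ext hx⟩
    · rintro ⟨x, rfl⟩
      apply ha
      rw [haq₀, map_zero]
      exact hqu x
  obtain ⟨r₀, hr₀⟩ := hA (↥F₀) i₀ q₀ hi₀inj hq₀surj hexact₀
  obtain ⟨s₀, hs₀⟩ := my_sec_of_retr i₀ q₀ hq₀surj hexact₀ r₀ hr₀
  set s₁ : A →ₗ[R] F := F₀.subtype ∘ₗ s₀ with hs₁
  have hqs₁ : ∀ α, q (s₁ α) = a α := by
    intro α
    rw [hs₁]
    simp only [LinearMap.comp_apply, Submodule.coe_subtype]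
    rw [← haq₀ (s₀ α)]
    congr 1
    exact LinearMap.ext_iff.mp hs₀ α
  -- F' = F / s₁(A)
  set S : Submodule R F := LinearMap.range s₁ with hS
  set u' : X →ₗ[R] (F ⧸ S) := S.mkQ ∘ₗ u with hu'
  have hSbq : S ≤ LinearMap.ker (b ∘ₗ q) := by
    rintro z ⟨α, rfl⟩
    simp [LinearMap.mem_ker, hqs₁, hba]
  set q' : (F ⧸ S) →ₗ[R] C := Submodule.liftQ S (b ∘ₗ q) hSbq with hq'
  have hu'inj : Function.Injective u' := by
    intro x₁ x₂ h
    have h' : u x₁ - u x₂ ∈ S := by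
      rw [← Submodule.Quotient.eq]
      simpa [hu', Submodule.mkQ_apply] using h
    obtain ⟨α, hα⟩ := h'
    have ha0 : a α = 0 := by
      rw [← hqs₁ α, hα, map_sub, hqu, hqu, sub_zero]
    have : α = 0 := ha (by simpa using ha0)
    rw [this, map_zero] at hα
    exact hu (sub_eq_zero.mp hα.symm)
  have hq'surj : Function.Surjective q' := by
    intro c
    obtain ⟨β, hβ⟩ := hb c
    obtain ⟨f, hf⟩ := hq β
    exact ⟨S.mkQ f, by simp [hq', hf, hβ]⟩
  have hexact' : LinearMap.ker q' = LinearMap.range u' := by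
    ext z
    simp only [LinearMap.mem_ker, LinearMap.mem_range]
    constructor
    · intro hz
      obtain ⟨f, rfl⟩ := S.mkQ_surjective z
      have hbq : b (q f) = 0 := by simpa [hq'] using hz
      have : q f ∈ LinearMap.range a := by rw [← hab]; simpa using hbq
      obtain ⟨α, hα⟩ := this
      have hfq : q (f - s₁ α) = 0 := by rw [map_sub, hqs₁, hα, sub_self]
      have : f - s₁ α ∈ LinearMap.range u := by rw [← hker]; simpa using hfq
      obtain ⟨x, hx⟩ := this
      refine ⟨x, ?_⟩
      rw [hu']
      simp only [LinearMap.comp_apply, Submodule.mkQ_apply]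
      rw [Submodule.Quotient.eq]
      rw [hx]
      exact ⟨-α, by simp⟩
    · rintro ⟨x, rfl⟩
      simp [hq', hu', hqu]
  obtain ⟨r', hr'⟩ := hC (F ⧸ S) u' q' hu'inj hq'surj hexact'
  refine ⟨r' ∘ₗ S.mkQ, ?_⟩
  rw [LinearMap.comp_assoc, ← hu', hr']
end Sec3

section Sec4
variable {R T E T' F : Type} [Ring R] [AddCommGroup T] [Module R T] [AddCommGroup E] [Module R E]
  [AddCommGroup T'] [Module R T']

theorem my_ext_T_E
    (i : R →ₗ[R] E) (p : E →ₗ[R] T')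
    (hi : Function.Injective i) (hp : Function.Surjective p)
    (hexact : LinearMap.ker p = LinearMap.range i)
    (eTT' : Ext1Zero R T T')
    (huniv : ∀ (F : Type) [AddCommGroup F] [Module R F] (j : R →ₗ[R] F) (q : F →ₗ[R] T),
      Function.Injective j → Function.Surjective q → LinearMap.ker q = LinearMap.range j →
      ∃ (h : T →ₗ[R] T') (φ : F →ₗ[R] E), φ ∘ₗ j = i ∧ p ∘ₗ φ = h ∘ₗ q) :
    Ext1Zero R T E := by
  intro F _ _ u q hu hq hker
  have hpi : ∀ x, p (i x) = 0 := fun x => by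
    have : i x ∈ LinearMap.ker p := by rw [hexact]; exact ⟨x, rfl⟩
    simpa using this
  have hqu : ∀ e, q (u e) = 0 := fun e => by
    have : u e ∈ LinearMap.ker q := by rw [hker]; exact ⟨e, rfl⟩
    simpa using this
  obtain ⟨t, ht⟩ := my_extend_of_ext u q hu hq hker p eTT'
  have htu : ∀ e, t (u e) = p e := fun e => LinearMap.ext_iff.mp ht e
  set F₀ : Submodule R F := LinearMap.ker t with hF₀
  set j : R →ₗ[R] ↥F₀ := LinearMap.codRestrict F₀ (u ∘ₗ i)
    (fun x => by simp [hF₀, LinearMap.mem_ker, htu, hpi]) with hj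
  set q₀ : ↥F₀ →ₗ[R] T := q ∘ₗ F₀.subtype with hq₀
  have hjcoe : ∀ x, ((j x : ↥F₀) : F) = u (i x) := fun x => rfl
  have hjinj : Function.Injective j := by
    intro x₁ x₂ h
    exact hi (hu (by rw [← hjcoe, ← hjcoe, h]))
  have hq₀surj : Function.Surjective q₀ := by
    intro a
    obtain ⟨x, hx⟩ := hq a
    obtain ⟨e, he⟩ := hp (t x)
    have hmem : x - u e ∈ F₀ := by
      simp [hF₀, LinearMap.mem_ker, map_sub, htu, he]
    refine ⟨⟨x - u e, hmem⟩, ?_⟩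
    simp [hq₀, map_sub, hqu, hx]
  have hexact₀ : LinearMap.ker q₀ = LinearMap.range j := by
    ext f
    simp only [LinearMap.mem_ker, LinearMap.mem_range]
    constructor
    · intro hf
      have : (f : F) ∈ LinearMap.range u := by
        rw [← hker]
        simpa [hq₀] using hf
      obtain ⟨e, he⟩ := this
      have hpe : p e = 0 := by
        rw [← htu, he]
        exact f.2
      have : e ∈ LinearMap.range i := by rw [← hexact]; simpa using hpe
      obtain ⟨x, hx⟩ := this
      exact ⟨x, Subtype.ext (by rw [hjcoe, hx, he])⟩
    · rintro ⟨x, rfl⟩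
      simp [hq₀, hjcoe, hqu]
  obtain ⟨h, φ, hφj, -⟩ := huniv (↥F₀) j q₀ hjinj hq₀surj hexact₀
  set θ : ↥F₀ →ₗ[R] F := F₀.subtype - u ∘ₗ φ with hθdef
  have hθ : LinearMap.ker q₀ ≤ LinearMap.ker θ := by
    intro z hz
    rw [hexact₀] at hz
    obtain ⟨x, rfl⟩ := hz
    have hφ : φ (j x) = i x := LinearMap.ext_iff.mp hφj x
    simp [hθdef, LinearMap.mem_ker, hjcoe, hφ]
  set σ' : (↥F₀ ⧸ LinearMap.ker q₀) →ₗ[R] F := Submodule.liftQ _ θ hθ with hσ'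
  set pbar : (↥F₀ ⧸ LinearMap.ker q₀) →ₗ[R] T := Submodule.liftQ _ q₀ le_rfl with hpbar
  have hpbar_inj : Function.Injective pbar := by
    rw [← LinearMap.ker_eq_bot, hpbar, Submodule.ker_liftQ_eq_bot _ _ _ le_rfl]
  have hpbar_surj : Function.Surjective pbar := by
    intro a
    obtain ⟨f, rfl⟩ := hq₀surj a
    exact ⟨Submodule.Quotient.mk f, rfl⟩
  set e' := LinearEquiv.ofBijective pbar ⟨hpbar_inj, hpbar_surj⟩ with he'
  have key : q ∘ₗ σ' = pbar := by
    apply Submodule.linearMap_qext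
    refine LinearMap.ext fun f => ?_
    simp [hσ', hθdef, hpbar, hq₀, map_sub, hqu]
  have hs : q ∘ₗ (σ' ∘ₗ e'.symm.toLinearMap) = LinearMap.id := by
    refine LinearMap.ext fun a => ?_
    have h1 : q (σ' (e'.symm a)) = pbar (e'.symm a) := LinearMap.ext_iff.mp key _
    have h2 : pbar (e'.symm a) = a := e'.apply_symm_apply a
    simp [LinearMap.comp_apply, h1, h2]
  exact my_retr_of_sec u q hu hker _ hs
end Sec4

section Sec5
variable {Λ T E T' : Type} [Ring Λ] [AddCommGroup T] [Module Λ T] [AddCommGroup E] [Module Λ E]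
  [AddCommGroup T'] [Module Λ T']

theorem my_part2 (hT' : InAdd Λ T T')
    (i : Λ →ₗ[Λ] E) (p : E →ₗ[Λ] T')
    (hi : Function.Injective i) (hp : Function.Surjective p)
    (hexact : LinearMap.ker p = LinearMap.range i) :
    ∃ (k : ℕ) (f : Λ →ₗ[Λ] (Fin k → T × E)), Function.Injective f ∧
      InAdd Λ (T × E) ((Fin k → T × E) ⧸ LinearMap.range f) := by
  obtain ⟨n, ι', π', hπι⟩ := hT'
  set f : Λ →ₗ[Λ] (Fin 1 → T × E) := LinearMap.pi (fun _ : Fin 1 => LinearMap.inr Λ T E ∘ₗ i)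
    with hf
  have hfinj : Function.Injective f := by
    intro x₁ x₂ h
    have := congrArg (fun g : Fin 1 → T × E => (g 0).2) h
    exact hi this
  set α : (Fin 1 → T × E) →ₗ[Λ] T × T' :=
    LinearMap.prod (LinearMap.fst Λ T E ∘ₗ LinearMap.proj 0)
      (p ∘ₗ LinearMap.snd Λ T E ∘ₗ LinearMap.proj 0) with hα
  have hαsurj : Function.Surjective α := by
    rintro ⟨a, b⟩
    obtain ⟨e, he⟩ := hp b
    exact ⟨fun _ => (a, e), by simp [hα, he]⟩
  have hαker : LinearMap.ker α = LinearMap.range f := by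
    ext g
    simp only [LinearMap.mem_ker, LinearMap.mem_range]
    constructor
    · intro hg
      rw [hα] at hg
      rw [Prod.ext_iff] at hg
      simp only [LinearMap.prod_apply, Pi.prod, LinearMap.comp_apply, LinearMap.proj_apply] at hg
      have h2 : (g 0).2 ∈ LinearMap.range i := by rw [← hexact]; simpa using hg.2
      obtain ⟨x, hx⟩ := h2
      refine ⟨x, funext fun k => ?_⟩
      have hk : k = 0 := Subsingleton.elim k 0
      rw [hk]
      have : f x 0 = (0, i x) := rfl
      rw [this, Prod.ext_iff]
      exact ⟨hg.1.symm, hx⟩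
    · rintro ⟨x, rfl⟩
      have h0 : f x 0 = (0, i x) := rfl
      rw [hα]
      simp only [LinearMap.prod_apply, Function.prod, LinearMap.comp_apply, LinearMap.proj_apply, h0]
      have : p (i x) = 0 := by
        have : i x ∈ LinearMap.ker p := by rw [hexact]; exact ⟨x, rfl⟩
        simpa using this
      simp [this, Prod.ext_iff]
  set eQ : ((Fin 1 → T × E) ⧸ LinearMap.range f) ≃ₗ[Λ] T × T' :=
    (Submodule.quotEquivOfEq (LinearMap.range f) (LinearMap.ker α) hαker.symm).trans
      (α.quotKerEquivOfSurjective hαsurj) with heQ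
  -- T × T' is a summand of Fin (n+1) → T × E
  set c : ∀ _ : Fin (n + 1), (T × T') →ₗ[Λ] (T × E) :=
    Fin.cases (LinearMap.inl Λ T E ∘ₗ LinearMap.fst Λ T T')
      (fun k => LinearMap.inl Λ T E ∘ₗ LinearMap.proj k ∘ₗ ι' ∘ₗ LinearMap.snd Λ T T') with hc
  set jmap : (T × T') →ₗ[Λ] (Fin (n + 1) → T × E) := LinearMap.pi c with hjmap
  set rmap : (Fin (n + 1) → T × E) →ₗ[Λ] (T × T') :=
    LinearMap.prod (LinearMap.fst Λ T E ∘ₗ LinearMap.proj (0 : Fin (n + 1)))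
      (π' ∘ₗ LinearMap.pi (fun k : Fin n => LinearMap.fst Λ T E ∘ₗ LinearMap.proj k.succ))
    with hrmap
  have hrj : rmap ∘ₗ jmap = LinearMap.id := by
    refine LinearMap.ext fun z => ?_
    have hc0 : c 0 z = (z.1, 0) := by rw [hc]; simp
    have hcs : ∀ k : Fin n, c k.succ z = (ι' z.2 k, 0) := fun k => by rw [hc]; simp
    have hj0 : jmap z 0 = (z.1, 0) := by rw [hjmap]; simpa using hc0
    have hjs : ∀ k : Fin n, jmap z k.succ = (ι' z.2 k, 0) := fun k => by
      rw [hjmap]; simpa using hcs k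
    have hπ : π' (ι' z.2) = z.2 := by simpa using LinearMap.ext_iff.mp hπι z.2
    rw [hrmap]
    simp only [LinearMap.comp_apply, LinearMap.prod_apply, Function.prod, LinearMap.proj_apply,
      LinearMap.pi_apply, LinearMap.fst_apply, LinearMap.id_apply]
    rw [hj0]
    refine Prod.ext rfl ?_
    show π' (fun k => (jmap z k.succ).1) = z.2
    have : (fun k => (jmap z k.succ).1) = ι' z.2 := funext fun k => by rw [hjs k]
    rw [this, hπ]
  refine ⟨1, f, hfinj, n + 1, jmap ∘ₗ eQ.toLinearMap, eQ.symm.toLinearMap ∘ₗ rmap, ?_⟩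
  refine LinearMap.ext fun z => ?_
  simp only [LinearMap.comp_apply, LinearEquiv.coe_coe, LinearMap.id_apply]
  have h1 : rmap (jmap (eQ z)) = eQ z := by
    have := LinearMap.ext_iff.mp hrj (eQ z)
    simpa using this
  rw [h1]
  simp
end Sec5

/-- **Bongartz.**  Let `Λ` be a hereditary artin algebra, `T` rigid, and
`0 → Λ → E → T' → 0` the universal `add T`-coextension of `Λ` (every
extension of `T` by `Λ` is a pullback of it along some `h : T → T'`).
Then `T ⊕ E` is a tilting module. -/
theorem bongartz_completion (Λ : Type) [Ring Λ] [IsArtinianRing Λ]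
    (hH : IsHereditaryRing Λ)
    (T E T' : Type) [AddCommGroup T] [Module Λ T] [AddCommGroup E] [Module Λ E]
    [AddCommGroup T'] [Module Λ T']
    (hTfl : IsFiniteLength Λ T) (hrigid : Ext1Zero Λ T T) (hT' : InAdd Λ T T')
    (i : Λ →ₗ[Λ] E) (p : E →ₗ[Λ] T')
    (hi : Function.Injective i) (hp : Function.Surjective p)
    (hexact : LinearMap.ker p = LinearMap.range i)
    (huniv : ∀ (F : Type) [AddCommGroup F] [Module Λ F] (j : Λ →ₗ[Λ] F) (q : F →ₗ[Λ] T),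
      Function.Injective j → Function.Surjective q → LinearMap.ker q = LinearMap.range j →
      ∃ (h : T →ₗ[Λ] T') (φ : F →ₗ[Λ] E), φ ∘ₗ j = i ∧ p ∘ₗ φ = h ∘ₗ q) :
    IsTiltingModule Λ (T × E) := by
  obtain ⟨n, hsum⟩ := hT'
  have eTT' : Ext1Zero Λ T T' := my_ext_summand_snd (my_ext_pow_snd n hrigid) hsum
  have eTE : Ext1Zero Λ T E := my_ext_T_E i p hi hp hexact eTT' huniv
  have eT'T : Ext1Zero Λ T' T := my_ext_summand_fst (my_ext_pow_fst n hrigid) hsum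
  have eT'E : Ext1Zero Λ T' E := my_ext_summand_fst (my_ext_pow_fst n eTE) hsum
  have eET : Ext1Zero Λ E T := my_ext_extension_fst i p hi hp hexact (my_ext_ring T) eT'T
  have eEE : Ext1Zero Λ E E := my_ext_extension_fst i p hi hp hexact (my_ext_ring E) eT'E
  exact ⟨my_ext_prod_fst (my_ext_prod_snd hrigid eTE) (my_ext_prod_snd eET eEE),
    my_part2 ⟨n, hsum⟩ i p hi hp hexact⟩
end

section
/- Let Λ be a hereditary artin algebra, T a rigid module, and B its Bongartz complement. Then the minimal right add(T)-approximation ρ_B: T_B → B is injective. -/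
/-- Two modules are coprime if they share no indecomposable direct summand. -/
def CoprimeMod (Λ : Type) [Ring Λ] (A B : Type) [AddCommGroup A] [Module Λ A]
    [AddCommGroup B] [Module Λ B] : Prop :=
  ∀ (X : Type) [AddCommGroup X] [Module Λ X],
    IsIndec Λ X → IsSummand Λ X A → ¬ IsSummand Λ X B

section Aux
open LinearMap
variable {Λ : Type} [Ring Λ]

lemma factor_surj {G A X : Type} [AddCommGroup G] [Module Λ G] [AddCommGroup A] [Module Λ A]
    [AddCommGroup X] [Module Λ X] (q : G →ₗ[Λ] A) (hq : Function.Surjective q)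
    (φ : G →ₗ[Λ] X) (h : ker q ≤ ker φ) :
    ∃ β : A →ₗ[Λ] X, β ∘ₗ q = φ := by
  refine ⟨((ker q).liftQ φ h) ∘ₗ (LinearMap.quotKerEquivOfSurjective q hq).symm.toLinearMap, ?_⟩
  ext g
  have h1 : (LinearMap.quotKerEquivOfSurjective q hq) (Submodule.Quotient.mk g) = q g := by
    simp [LinearMap.quotKerEquivOfSurjective, LinearMap.quotKerEquivRange]
  have h2 : (LinearMap.quotKerEquivOfSurjective q hq).symm (q g) = Submodule.Quotient.mk g :=
    (LinearMap.quotKerEquivOfSurjective q hq).injective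
      (by rw [LinearEquiv.apply_symm_apply, h1])
  simp [h2]

variable {C G A : Type} [AddCommGroup C] [Module Λ C] [AddCommGroup G] [Module Λ G]
  [AddCommGroup A] [Module Λ A]

lemma section_of_retraction (j : C →ₗ[Λ] G) (q : G →ₗ[Λ] A)
    (hq : Function.Surjective q) (hex : ker q = range j)
    (r : G →ₗ[Λ] C) (hr : r ∘ₗ j = LinearMap.id) :
    ∃ s : A →ₗ[Λ] G, q ∘ₗ s = LinearMap.id := by
  have hrj : ∀ c, r (j c) = c := fun c => congrArg (fun f => f c) hr
  have hqj : ∀ c, q (j c) = 0 := fun c => show j c ∈ ker q from hex ▸ ⟨c, rfl⟩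
  have hker : ker q ≤ ker (LinearMap.id - j ∘ₗ r) := by
    intro x hx
    rw [hex] at hx
    obtain ⟨c, rfl⟩ := hx
    simp [LinearMap.mem_ker, LinearMap.sub_apply, hrj]
  obtain ⟨s, hs⟩ := factor_surj q hq (LinearMap.id - j ∘ₗ r) hker
  refine ⟨s, ?_⟩
  ext a
  obtain ⟨g, rfl⟩ := hq a
  have : s (q g) = g - j (r g) := by
    have := congrArg (fun f => f g) hs
    simpa using this
  simp [this, map_sub, hqj]

lemma retraction_of_section (j : C →ₗ[Λ] G) (hj : Function.Injective j) (q : G →ₗ[Λ] A)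
    (hex : ker q = range j) (s : A →ₗ[Λ] G) (hs : q ∘ₗ s = LinearMap.id) :
    ∃ r : G →ₗ[Λ] C, r ∘ₗ j = LinearMap.id := by
  have hqs : ∀ a, q (s a) = a := fun a => congrArg (fun f => f a) hs
  have hqj : ∀ c, q (j c) = 0 := fun c => show j c ∈ ker q from hex ▸ ⟨c, rfl⟩
  have hmem : ∀ g : G, ((LinearMap.id - s ∘ₗ q : G →ₗ[Λ] G)) g ∈ range j := by
    intro g
    rw [← hex]
    simp [LinearMap.mem_ker, LinearMap.sub_apply, map_sub, hqs]
  refine ⟨(LinearEquiv.ofInjective j hj).symm.toLinearMap ∘ₗ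
    codRestrict (range j) ((LinearMap.id - s ∘ₗ q : G →ₗ[Λ] G)) hmem, ?_⟩
  ext c
  have h1 : ((LinearMap.id - s ∘ₗ q : G →ₗ[Λ] G)) (j c) = j c := by
    simp [LinearMap.sub_apply, hqj]
  have h2 : codRestrict (range j) ((LinearMap.id - s ∘ₗ q : G →ₗ[Λ] G)) hmem (j c)
      = (LinearEquiv.ofInjective j hj) c := by
    apply Subtype.ext
    simp only [LinearMap.codRestrict_apply, h1]
    rfl
  simp [LinearMap.comp_apply, h2]

end Aux

section Aux2
open LinearMap
variable {Λ : Type} [Ring Λ]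
variable {C G A : Type} [AddCommGroup C] [Module Λ C] [AddCommGroup G] [Module Λ G]
  [AddCommGroup A] [Module Λ A]

lemma ext1zero_pi_left (h : Ext1Zero Λ A C) (n : ℕ) : Ext1Zero Λ (Fin n → A) C := by
  intro G _ _ j q hj hq hex
  have hqj : ∀ c, q (j c) = 0 := fun c => show j c ∈ ker q from hex ▸ ⟨c, rfl⟩
  set Gi : Fin n → Submodule Λ G := fun i =>
    Submodule.comap q (range (LinearMap.single Λ (fun _ : Fin n => A) i)) with hGi
  have hsingle : ∀ (i : Fin n) (f : Fin n → A),
      f ∈ range (LinearMap.single Λ (fun _ : Fin n => A) i) → f = Pi.single i (f i) := by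
    rintro i f ⟨a, rfl⟩
    simp [LinearMap.single_apply]
  have key : ∀ i : Fin n, ∃ s : A →ₗ[Λ] (Gi i),
      ((LinearMap.proj i) ∘ₗ q ∘ₗ (Gi i).subtype) ∘ₗ s = LinearMap.id := by
    intro i
    have hjGi : ∀ c : C, j c ∈ Gi i := by
      intro c
      simp only [hGi, Submodule.mem_comap, hqj c]
      exact Submodule.zero_mem _
    set ji : C →ₗ[Λ] (Gi i) := codRestrict (Gi i) j hjGi with hji
    set qi : (Gi i) →ₗ[Λ] A := (LinearMap.proj i) ∘ₗ q ∘ₗ (Gi i).subtype with hqi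
    have hjii : Function.Injective ji := fun x y hxy => hj (congrArg Subtype.val hxy)
    have hqii : Function.Surjective qi := by
      intro a
      obtain ⟨g, hg⟩ := hq (Pi.single i a)
      refine ⟨⟨g, ?_⟩, ?_⟩
      · simp only [hGi, Submodule.mem_comap, hg]
        exact ⟨a, by ext k; simp [LinearMap.single_apply]⟩
      · simp [hqi, hg]
    have hexi : ker qi = range ji := by
      apply le_antisymm
      · rintro ⟨g, hg⟩ hgk
        have h0 : q g i = 0 := hgk
        have h1 : q g = Pi.single i (q g i) := hsingle i (q g) hg
        have h2 : q g = 0 := by rw [h1, h0]; simp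
        have : g ∈ range j := by rw [← hex]; exact h2
        obtain ⟨c, hc⟩ := this
        exact ⟨c, Subtype.ext hc⟩
      · rintro x ⟨c, rfl⟩
        show qi (ji c) = 0
        simp [hqi, hji, hqj c]
    obtain ⟨r, hr⟩ := h (Gi i) ji qi hjii hqii hexi
    exact section_of_retraction ji qi hqii hexi r hr
  choose si hsi using key
  set s : (Fin n → A) →ₗ[Λ] G :=
    ∑ i : Fin n, ((Gi i).subtype ∘ₗ si i) ∘ₗ
      (LinearMap.proj (R := Λ) (φ := fun _ : Fin n => A) i) with hsdef
  have hqsi : ∀ (i : Fin n) (a : A), q ((si i a : G)) = Pi.single i a := by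
    intro i a
    have hmem : q ((si i a : G)) ∈ range (LinearMap.single Λ (fun _ : Fin n => A) i) :=
      (si i a).2
    have hval : q ((si i a : G)) i = a := congrArg (fun f => f a) (hsi i)
    have := hsingle i _ hmem
    rw [this, hval]
  have hqs : q ∘ₗ s = LinearMap.id := by
    apply LinearMap.ext; intro f
    simp only [hsdef, LinearMap.comp_apply, LinearMap.id_apply, LinearMap.sum_apply, map_sum]
    simp only [Submodule.subtype_apply, LinearMap.proj_apply, hqsi]
    exact Finset.univ_sum_single f
  exact retraction_of_section j hj q hex s hqs

lemma ext1zero_summand_left {X : Type} [AddCommGroup X] [Module Λ X]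
    (h : Ext1Zero Λ A C) (hX : IsSummand Λ X A) : Ext1Zero Λ X C := by
  obtain ⟨ι, π, hπι⟩ := hX
  have hπι' : ∀ x : X, π (ι x) = x := fun x => congrArg (fun f => f x) hπι
  intro G _ _ j q hj hq hex
  have hqj : ∀ c, q (j c) = 0 := fun c => show j c ∈ ker q from hex ▸ ⟨c, rfl⟩
  set G' : Submodule Λ (G × A) :=
    ker ((q ∘ₗ LinearMap.fst Λ G A) - (π ∘ₗ LinearMap.snd Λ G A)) with hG'
  have hmem : ∀ x : G × A, x ∈ G' ↔ q x.1 = π x.2 := by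
    intro x
    simp [hG', LinearMap.mem_ker, sub_eq_zero, LinearMap.sub_apply]
  set j' : C →ₗ[Λ] G' := codRestrict G' (LinearMap.prod j 0)
    (fun c => by rw [hmem]; simp [LinearMap.prod_apply, hqj c]) with hj'
  set q' : G' →ₗ[Λ] A := (LinearMap.snd Λ G A) ∘ₗ G'.subtype with hq'
  have hj'i : Function.Injective j' := by
    intro x y hxy
    apply hj
    exact congrArg (fun z : G' => (z : G × A).1) hxy
  have hq's : Function.Surjective q' := by
    intro a
    obtain ⟨g, hg⟩ := hq (π a)
    exact ⟨⟨(g, a), (hmem (g, a)).mpr hg⟩, rfl⟩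
  have hex' : ker q' = range j' := by
    apply le_antisymm
    · rintro ⟨⟨g, a⟩, hga⟩ hk
      have ha : a = 0 := hk
      have hg0 : q g = 0 := by
        have := (hmem (g, a)).mp hga
        rw [ha] at this; simpa using this
      have : g ∈ range j := by rw [← hex]; exact hg0
      obtain ⟨c, hc⟩ := this
      refine ⟨c, Subtype.ext ?_⟩
      simp [hj', hc, ha, LinearMap.prod_apply]
    · rintro x ⟨c, rfl⟩
      show q' (j' c) = 0
      simp [hq', hj']
  obtain ⟨r', hr'⟩ := h G' j' q' hj'i hq's hex'
  have hmem2 : ∀ g : G, (LinearMap.prod LinearMap.id (ι ∘ₗ q)) g ∈ G' := by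
    intro g
    rw [hmem]
    simp [LinearMap.prod_apply, hπι']
  refine ⟨r' ∘ₗ codRestrict G' (LinearMap.prod LinearMap.id (ι ∘ₗ q)) hmem2, ?_⟩
  apply LinearMap.ext; intro c
  have heq : codRestrict G' (LinearMap.prod LinearMap.id (ι ∘ₗ q)) hmem2 (j c) = j' c := by
    apply Subtype.ext
    simp [LinearMap.prod_apply, hj', hqj c]
  simp only [LinearMap.comp_apply]
  rw [heq]
  exact congrArg (fun f => f c) hr'

lemma ext1zero_inadd_left {X : Type} [AddCommGroup X] [Module Λ X]
    (h : Ext1Zero Λ A C) (hX : InAdd Λ A X) : Ext1Zero Λ X C := by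
  obtain ⟨n, hs⟩ := hX
  exact ext1zero_summand_left (ext1zero_pi_left h n) hs

end Aux2

section Aux3
open LinearMap
variable {Λ : Type} [Ring Λ]
variable {C G A : Type} [AddCommGroup C] [Module Λ C] [AddCommGroup G] [Module Λ G]
  [AddCommGroup A] [Module Λ A]

lemma ext1zero_pi_right (h : Ext1Zero Λ A C) (n : ℕ) : Ext1Zero Λ A (Fin n → C) := by
  intro G _ _ j q hj hq hex
  have hqj : ∀ f, q (j f) = 0 := fun f => show j f ∈ ker q from hex ▸ ⟨f, rfl⟩
  have key : ∀ i : Fin n,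
      ∃ ri : (G ⧸ Submodule.map j (ker (LinearMap.proj (R := Λ) (φ := fun _ : Fin n => C) i)))
        →ₗ[Λ] C, ∀ c : C, ri (Submodule.Quotient.mk (j (Pi.single i c))) = c := by
    intro i
    set Ni := Submodule.map j (ker (LinearMap.proj (R := Λ) (φ := fun _ : Fin n => C) i))
      with hNi
    set ji : C →ₗ[Λ] G ⧸ Ni :=
      Ni.mkQ ∘ₗ j ∘ₗ (LinearMap.single Λ (fun _ : Fin n => C) i) with hji
    have hNile : Ni ≤ ker q := by
      rintro x ⟨f, _, rfl⟩
      exact hqj f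
    set qi : G ⧸ Ni →ₗ[Λ] A := Ni.liftQ q hNile with hqi
    have hjii : Function.Injective ji := by
      intro x y hxy
      have hsub : j (Pi.single i x) - j (Pi.single i y) ∈ Ni := by
        rw [← Submodule.Quotient.eq]
        simpa [hji, LinearMap.single_apply] using hxy
      rw [← map_sub] at hsub
      obtain ⟨f, hf, hfe⟩ := hsub
      have hfeq : f = Pi.single i x - Pi.single i y := hj hfe
      have hf0 : f i = 0 := hf
      have : x - y = 0 := by
        have := congrArg (fun g => g i) hfeq
        simpa [hf0] using this.symm
      exact sub_eq_zero.mp this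
    have hqii : Function.Surjective qi := by
      intro a
      obtain ⟨g, hg⟩ := hq a
      exact ⟨Submodule.Quotient.mk g, by simpa [hqi] using hg⟩
    have hexi : ker qi = range ji := by
      apply le_antisymm
      · intro x hx
        obtain ⟨g, rfl⟩ := Submodule.mkQ_surjective Ni x
        have hg : q g = 0 := hx
        have : g ∈ range j := by rw [← hex]; exact hg
        obtain ⟨f, rfl⟩ := this
        refine ⟨f i, ?_⟩
        show Ni.mkQ (j (Pi.single i (f i))) = Ni.mkQ (j f)
        rw [Submodule.mkQ_apply, Submodule.mkQ_apply, Submodule.Quotient.eq, ← map_sub]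
        exact ⟨Pi.single i (f i) - f, by simp [LinearMap.mem_ker], rfl⟩
      · rintro x ⟨c, rfl⟩
        show qi (ji c) = 0
        simp [hqi, hji, hqj]
    obtain ⟨ri, hri⟩ := h (G ⧸ Ni) ji qi hjii hqii hexi
    refine ⟨ri, fun c => ?_⟩
    have := congrArg (fun f => f c) hri
    simpa [hji, LinearMap.single_apply] using this
  choose ri hri using key
  refine ⟨LinearMap.pi (fun i => ri i ∘ₗ (Submodule.map j
    (ker (LinearMap.proj (R := Λ) (φ := fun _ : Fin n => C) i))).mkQ), ?_⟩
  apply LinearMap.ext; intro f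
  funext i
  show ri i ((Submodule.map j (ker (LinearMap.proj (R := Λ) (φ := fun _ : Fin n => C) i))).mkQ
    (j f)) = f i
  have heq : (Submodule.map j (ker (LinearMap.proj (R := Λ) (φ := fun _ : Fin n => C) i))).mkQ
      (j f) = Submodule.Quotient.mk (j (Pi.single i (f i))) := by
    rw [Submodule.mkQ_apply, Submodule.Quotient.eq, ← map_sub]
    exact ⟨f - Pi.single i (f i), by simp [LinearMap.mem_ker], rfl⟩
  rw [heq, hri]

lemma ext1zero_summand_right {X : Type} [AddCommGroup X] [Module Λ X]
    (h : Ext1Zero Λ A C) (hX : IsSummand Λ X C) : Ext1Zero Λ A X := by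
  obtain ⟨ι, π, hπι⟩ := hX
  have hπι' : ∀ x : X, π (ι x) = x := fun x => congrArg (fun f => f x) hπι
  intro G _ _ j q hj hq hex
  have hqj : ∀ x, q (j x) = 0 := fun x => show j x ∈ ker q from hex ▸ ⟨x, rfl⟩
  set N : Submodule Λ (C × G) := range (LinearMap.prod ι (-j)) with hN
  set j' : C →ₗ[Λ] (C × G) ⧸ N := N.mkQ ∘ₗ LinearMap.inl Λ C G with hj'
  have hNle : N ≤ ker (q ∘ₗ LinearMap.snd Λ C G) := by
    rintro _ ⟨x, rfl⟩
    simp [LinearMap.mem_ker, LinearMap.prod_apply, hqj]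
  set q' : (C × G) ⧸ N →ₗ[Λ] A := N.liftQ (q ∘ₗ LinearMap.snd Λ C G) hNle with hq'
  have hj'i : Function.Injective j' := by
    intro c d hcd
    have : ((c : C), (0 : G)) - ((d : C), (0 : G)) ∈ N := by
      rw [← Submodule.Quotient.eq]
      simpa [hj'] using hcd
    obtain ⟨x, hx⟩ := this
    have h2 : -(j x) = 0 := by
      have := congrArg Prod.snd hx
      simpa [LinearMap.prod_apply] using this
    have h3 : x = 0 := hj (by simpa using h2)
    have h1 : ι x = c - d := by
      have := congrArg Prod.fst hx
      simpa [LinearMap.prod_apply] using this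
    rw [h3] at h1
    simpa using sub_eq_zero.mp (by simpa using h1.symm)
  have hq's : Function.Surjective q' := by
    intro a
    obtain ⟨g, hg⟩ := hq a
    exact ⟨Submodule.Quotient.mk (0, g), by simpa [hq'] using hg⟩
  have hex' : ker q' = range j' := by
    apply le_antisymm
    · intro x hx
      obtain ⟨⟨c, g⟩, rfl⟩ := Submodule.mkQ_surjective N x
      have hg : q g = 0 := hx
      have : g ∈ range j := by rw [← hex]; exact hg
      obtain ⟨y, rfl⟩ := this
      refine ⟨c + ι y, ?_⟩
      show N.mkQ (c + ι y, 0) = N.mkQ (c, j y)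
      rw [Submodule.mkQ_apply, Submodule.mkQ_apply, Submodule.Quotient.eq]
      exact ⟨y, by simp [LinearMap.prod_apply]⟩
    · rintro _ ⟨c, rfl⟩
      show q' (j' c) = 0
      simp [hq', hj']
  obtain ⟨r', hr'⟩ := h ((C × G) ⧸ N) j' q' hj'i hq's hex'
  refine ⟨π ∘ₗ r' ∘ₗ N.mkQ ∘ₗ LinearMap.inr Λ C G, ?_⟩
  apply LinearMap.ext; intro x
  have heq : N.mkQ (0, j x) = N.mkQ (ι x, 0) := by
    rw [Submodule.mkQ_apply, Submodule.mkQ_apply, Submodule.Quotient.eq]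
    exact ⟨-x, by simp [LinearMap.prod_apply]⟩
  show π (r' (N.mkQ (0, j x))) = x
  rw [heq]
  have h4 : r' (j' (ι x)) = ι x := congrArg (fun f => f (ι x)) hr'
  exact (congrArg π h4).trans (hπι' x)

lemma ext1zero_inadd_right {X : Type} [AddCommGroup X] [Module Λ X]
    (h : Ext1Zero Λ A C) (hX : InAdd Λ C X) : Ext1Zero Λ A X := by
  obtain ⟨n, hs⟩ := hX
  exact ext1zero_summand_right (ext1zero_pi_right h n) hs

end Aux3

section Aux4
open LinearMap
variable {Λ : Type} [Ring Λ]
variable {C E' T' : Type} [AddCommGroup C] [Module Λ C] [AddCommGroup E'] [Module Λ E']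
  [AddCommGroup T'] [Module Λ T']

/-- If `0 → Λ → E' → T' → 0` is exact and `Ext¹(T', C) = 0`, then `Ext¹(E', C) = 0`. -/
lemma ext1zero_mid (i : Λ →ₗ[Λ] E') (p : E' →ₗ[Λ] T')
    (hi : Function.Injective i) (hp : Function.Surjective p)
    (hexact : ker p = range i) (h : Ext1Zero Λ T' C) : Ext1Zero Λ E' C := by
  intro G _ _ j q hj hq hex
  have hqj : ∀ c, q (j c) = 0 := fun c => show j c ∈ ker q from hex ▸ ⟨c, rfl⟩
  have hpi : ∀ l : Λ, p (i l) = 0 := fun l => show i l ∈ ker p from hexact ▸ ⟨l, rfl⟩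
  obtain ⟨g₀, hg₀⟩ := hq (i 1)
  set σ : Λ →ₗ[Λ] G := LinearMap.toSpanSingleton Λ G g₀ with hσ
  have hqσ : ∀ l, q (σ l) = i l := by
    intro l
    have : q (l • g₀) = l • q g₀ := map_smul q l g₀
    rw [hσ]
    simp only [LinearMap.toSpanSingleton_apply, this, hg₀]
    rw [← map_smul, smul_eq_mul, mul_one]
  set N : Submodule Λ G := range σ with hN
  set j'' : C →ₗ[Λ] G ⧸ N := N.mkQ ∘ₗ j with hj''
  have hNle : N ≤ ker (p ∘ₗ q) := by
    rintro _ ⟨l, rfl⟩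
    simp [LinearMap.mem_ker, hqσ, hpi]
  set q'' : G ⧸ N →ₗ[Λ] T' := N.liftQ (p ∘ₗ q) hNle with hq''
  have hj''i : Function.Injective j'' := by
    intro c d hcd
    have : j c - j d ∈ N := by
      rw [← Submodule.Quotient.eq]
      simpa [hj''] using hcd
    rw [← map_sub] at this
    obtain ⟨l, hl⟩ := this
    have h1 : q (σ l) = 0 := by rw [hl, hqj]
    have h2 : i l = 0 := by rw [← hqσ l, h1]
    have h3 : l = 0 := hi (by simpa using h2)
    have h4 : j (c - d) = 0 := by rw [← hl, h3, map_zero]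
    have h5 : c - d = 0 := hj (by rw [h4, map_zero])
    exact sub_eq_zero.mp h5
  have hq''s : Function.Surjective q'' := by
    intro t
    obtain ⟨e, he⟩ := hp t
    obtain ⟨g, hg⟩ := hq e
    exact ⟨Submodule.Quotient.mk g, by simp [hq'', hg, he]⟩
  have hex'' : ker q'' = range j'' := by
    apply le_antisymm
    · intro x hx
      obtain ⟨g, rfl⟩ := Submodule.mkQ_surjective N x
      have hg : p (q g) = 0 := hx
      have : q g ∈ range i := by rw [← hexact]; exact hg
      obtain ⟨l, hl⟩ := this
      have : q (g - σ l) = 0 := by rw [map_sub, hqσ, hl, sub_self]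
      have : g - σ l ∈ range j := by rw [← hex]; exact this
      obtain ⟨c, hc⟩ := this
      refine ⟨c, ?_⟩
      show N.mkQ (j c) = N.mkQ g
      rw [Submodule.mkQ_apply, Submodule.mkQ_apply, Submodule.Quotient.eq, hc]
      exact ⟨-l, by simp⟩
    · rintro _ ⟨c, rfl⟩
      show q'' (j'' c) = 0
      simp [hq'', hj'', hqj]
  obtain ⟨r'', hr''⟩ := h (G ⧸ N) j'' q'' hj''i hq''s hex''
  refine ⟨r'' ∘ₗ N.mkQ, ?_⟩
  apply LinearMap.ext
  intro c
  exact congrArg (fun f => f c) hr''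

/-- Over a hereditary ring, `Ext¹(B, C) = 0` passes to submodules (here: any module
`I` admitting an injection into `B`). -/
lemma ext1zero_sub {B I : Type} [AddCommGroup B] [Module Λ B] [AddCommGroup I] [Module Λ I]
    (hH : IsHereditaryRing Λ) (ι : I →ₗ[Λ] B) (hι : Function.Injective ι)
    (h : Ext1Zero Λ B C) : Ext1Zero Λ I C := by
  intro G _ _ j q hj hq hex
  have hqj : ∀ c, q (j c) = 0 := fun c => show j c ∈ ker q from hex ▸ ⟨c, rfl⟩
  -- free cover of B
  set F : Type := B →₀ Λ with hF
  set π : F →ₗ[Λ] B := Finsupp.linearCombination Λ (_root_.id : B → B) with hπ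
  have hπs : Function.Surjective π := Finsupp.linearCombination_id_surjective Λ B
  set F' : Submodule Λ F := Submodule.comap π (range ι) with hF'
  have hproj : Module.Projective Λ F' := hH F inferInstance F'
  -- the induced surjection F' → I
  set e := LinearEquiv.ofInjective ι hι with he
  have hπ'mem : ∀ x : F', π (x : F) ∈ range ι := fun x => x.2
  set π' : F' →ₗ[Λ] I := e.symm.toLinearMap ∘ₗ
    codRestrict (range ι) (π ∘ₗ F'.subtype) hπ'mem with hπ'
  have hιπ' : ∀ x : F', ι (π' x) = π (x : F) := by
    intro x
    have h1 : e (π' x) = codRestrict (range ι) (π ∘ₗ F'.subtype) hπ'mem x := by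
      simp [hπ', LinearEquiv.apply_symm_apply]
    have h2 : (e (π' x) : B) = ι (π' x) := by
      rw [he]; rfl
    rw [← h2, h1]
    rfl
  have hπ's : Function.Surjective π' := by
    intro x
    obtain ⟨f, hf⟩ := hπs (ι x)
    have hfF' : f ∈ F' := by
      rw [hF']
      exact Submodule.mem_comap.mpr (hf ▸ ⟨x, rfl⟩)
    refine ⟨⟨f, hfF'⟩, hι ?_⟩
    rw [hιπ']
    exact hf
  -- lift along the surjection q using projectivity
  obtain ⟨lam, hlam⟩ := Module.projective_lifting_property q π' hq
  have hlam' : ∀ x : F', q (lam x) = π' x := fun x => congrArg (fun f => f x) hlam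
  -- pushout
  set W : Submodule Λ (G × F) := range (LinearMap.prod lam (-(F'.subtype))) with hW
  set jt : C →ₗ[Λ] (G × F) ⧸ W := W.mkQ ∘ₗ LinearMap.inl Λ G F ∘ₗ j with hjt
  set qaux : G × F →ₗ[Λ] B := (π ∘ₗ LinearMap.snd Λ G F) + ((ι ∘ₗ q) ∘ₗ LinearMap.fst Λ G F)
    with hqaux
  have hWle : W ≤ ker qaux := by
    rintro _ ⟨x, rfl⟩
    simp only [LinearMap.mem_ker, hqaux, LinearMap.add_apply, LinearMap.comp_apply,
      LinearMap.prod_apply, Function.prod, LinearMap.snd_apply, LinearMap.fst_apply,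
      LinearMap.neg_apply, Submodule.subtype_apply, map_neg]
    rw [hlam', hιπ']
    simp
  set qt : (G × F) ⧸ W →ₗ[Λ] B := W.liftQ qaux hWle with hqt
  have hjti : Function.Injective jt := by
    intro c d hcd
    have : (j c - j d, (0 : F)) ∈ W := by
      have : (j c, (0:F)) - (j d, 0) ∈ W := by
        rw [← Submodule.Quotient.eq]
        simpa [hjt] using hcd
      simpa using this
    obtain ⟨x, hx⟩ := this
    have h2 : (lam x, -((x : F))) = (j c - j d, (0:F)) := by
      simpa [LinearMap.prod_apply] using hx
    have h2' : -((x : F)) = (0 : F) := congrArg Prod.snd h2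
    have h3 : x = 0 := Subtype.ext (neg_eq_zero.mp h2')
    have h1 : lam x = j c - j d := congrArg Prod.fst h2
    rw [h3, map_zero] at h1
    exact hj (sub_eq_zero.mp h1.symm)
  have hqts : Function.Surjective qt := by
    intro b
    obtain ⟨f, hf⟩ := hπs b
    refine ⟨Submodule.Quotient.mk (0, f), ?_⟩
    simp [hqt, hqaux, hf]
  have hext : ker qt = range jt := by
    apply le_antisymm
    · intro x hx
      obtain ⟨⟨g, f⟩, rfl⟩ := Submodule.mkQ_surjective W x
      have hg : π f + ι (q g) = 0 := hx
      have hπf : ι (-(q g)) = π f := by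
        rw [map_neg]
        exact (eq_neg_of_add_eq_zero_left hg).symm
      have hfF' : f ∈ F' := Submodule.mem_comap.mpr ⟨-(q g), hπf⟩
      have hq0 : q (g + lam ⟨f, hfF'⟩) = 0 := by
        apply hι
        have hsplit : ι (q (g + lam ⟨f, hfF'⟩)) = ι (q g) + ι (π' ⟨f, hfF'⟩) := by
          rw [map_add, map_add, hlam']
        rw [map_zero, hsplit, hιπ']
        show ι (q g) + π f = 0
        rw [add_comm]
        exact hg
      have : g + lam ⟨f, hfF'⟩ ∈ range j := by rw [← hex]; exact hq0
      obtain ⟨c, hc⟩ := this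
      refine ⟨c, ?_⟩
      show W.mkQ (j c, 0) = W.mkQ (g, f)
      rw [Submodule.mkQ_apply, Submodule.mkQ_apply, Submodule.Quotient.eq]
      refine ⟨⟨f, hfF'⟩, ?_⟩
      show (lam ⟨f, hfF'⟩, -((⟨f, hfF'⟩ : F') : F)) = (j c, 0) - (g, f)
      rw [Prod.ext_iff]
      constructor
      · show lam ⟨f, hfF'⟩ = j c - g
        rw [hc]
        abel
      · show -((⟨f, hfF'⟩ : F') : F) = 0 - f
        simp
    · rintro _ ⟨c, rfl⟩
      show qt (jt c) = 0
      simp [hqt, hjt, hqaux, hqj]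
  obtain ⟨rt, hrt⟩ := h ((G × F) ⧸ W) jt qt hjti hqts hext
  refine ⟨rt ∘ₗ W.mkQ ∘ₗ LinearMap.inl Λ G F, ?_⟩
  apply LinearMap.ext; intro c
  exact congrArg (fun f => f c) hrt

end Aux4

section Aux5
open LinearMap
variable {Λ : Type} [Ring Λ]

/-- Wakamatsu-type lemma: the kernel of an `add T`-approximation `ρ : T'' → B`
satisfies `Ext¹(T, ker ρ) = 0`, provided `Ext¹(T, T'') = 0`. -/
lemma wakamatsu {T T'' B : Type} [AddCommGroup T] [Module Λ T] [AddCommGroup T'']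
    [Module Λ T''] [AddCommGroup B] [Module Λ B]
    (hTT'' : Ext1Zero Λ T T'') (ρ : T'' →ₗ[Λ] B)
    (happrox : ∀ g : T →ₗ[Λ] B, ∃ h : T →ₗ[Λ] T'', ρ ∘ₗ h = g) :
    Ext1Zero Λ T ↥(LinearMap.ker ρ) := by
  intro G _ _ j q hj hq hex
  have hqj : ∀ k, q (j k) = 0 := fun k => show j k ∈ ker q from hex ▸ ⟨k, rfl⟩
  set N : Submodule Λ (T'' × G) :=
    range (LinearMap.prod (LinearMap.ker ρ).subtype (-j)) with hN
  set ι₁ : T'' →ₗ[Λ] (T'' × G) ⧸ N := N.mkQ ∘ₗ LinearMap.inl Λ T'' G with hι₁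
  have hNle : N ≤ ker (q ∘ₗ LinearMap.snd Λ T'' G) := by
    rintro _ ⟨k, rfl⟩
    simp [LinearMap.mem_ker, LinearMap.prod_apply, hqj]
  set qW : (T'' × G) ⧸ N →ₗ[Λ] T := N.liftQ (q ∘ₗ LinearMap.snd Λ T'' G) hNle with hqW
  have hι₁i : Function.Injective ι₁ := by
    intro s t hst
    have : (s, (0:G)) - (t, 0) ∈ N := by
      rw [← Submodule.Quotient.eq]
      simpa [hι₁] using hst
    obtain ⟨k, hk⟩ := this
    have h2 : ((((LinearMap.ker ρ).subtype k : T''), -(j k)) : T'' × G) = (s - t, 0) := by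
      simpa [LinearMap.prod_apply] using hk
    have h3 : -(j k) = (0 : G) := congrArg Prod.snd h2
    have h4 : k = 0 := by
      have : j k = 0 := neg_eq_zero.mp h3
      have := hj (this.trans (map_zero j).symm)
      exact this
    have h5 : ((LinearMap.ker ρ).subtype k : T'') = s - t := congrArg Prod.fst h2
    rw [h4, map_zero] at h5
    exact sub_eq_zero.mp h5.symm
  have hqWs : Function.Surjective qW := by
    intro t
    obtain ⟨g, hg⟩ := hq t
    exact ⟨Submodule.Quotient.mk (0, g), by simpa [hqW] using hg⟩
  have hexW : ker qW = range ι₁ := by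
    apply le_antisymm
    · intro x hx
      obtain ⟨⟨s, g⟩, rfl⟩ := Submodule.mkQ_surjective N x
      have hg : q g = 0 := hx
      have : g ∈ range j := by rw [← hex]; exact hg
      obtain ⟨k, rfl⟩ := this
      refine ⟨s + (LinearMap.ker ρ).subtype k, ?_⟩
      show N.mkQ (s + (LinearMap.ker ρ).subtype k, 0) = N.mkQ (s, j k)
      rw [Submodule.mkQ_apply, Submodule.mkQ_apply, Submodule.Quotient.eq]
      refine ⟨k, ?_⟩
      show (((LinearMap.ker ρ).subtype k : T''), -(j k)) =
        (s + (LinearMap.ker ρ).subtype k, (0:G)) - (s, j k)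
      rw [Prod.ext_iff]
      constructor
      · show ((LinearMap.ker ρ).subtype k : T'') = s + (LinearMap.ker ρ).subtype k - s
        abel
      · show -(j k) = 0 - j k
        simp
    · rintro _ ⟨s, rfl⟩
      show qW (ι₁ s) = 0
      simp [hqW, hι₁]
  obtain ⟨rW, hrW⟩ := hTT'' ((T'' × G) ⧸ N) ι₁ qW hι₁i hqWs hexW
  set α : G →ₗ[Λ] T'' := rW ∘ₗ N.mkQ ∘ₗ LinearMap.inr Λ T'' G with hα
  have hαj : ∀ k : ↥(LinearMap.ker ρ), α (j k) = (k : T'') := by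
    intro k
    have heq : N.mkQ (0, j k) = N.mkQ ((k : T''), 0) := by
      rw [Submodule.mkQ_apply, Submodule.mkQ_apply, Submodule.Quotient.eq]
      refine ⟨-k, ?_⟩
      show (((LinearMap.ker ρ).subtype (-k) : T''), -(j (-k))) =
        ((0:T''), j k) - ((k : T''), 0)
      rw [Prod.ext_iff]
      constructor
      · show ((LinearMap.ker ρ).subtype (-k) : T'') = 0 - (k : T'')
        simp
      · show -(j (-k)) = j k - 0
        simp
    show rW (N.mkQ (0, j k)) = (k : T'')
    rw [heq]
    exact congrArg (fun f => f (k : T'')) hrW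
  have hker : ker q ≤ ker (ρ ∘ₗ α) := by
    intro g hg
    rw [hex] at hg
    obtain ⟨k, rfl⟩ := hg
    show ρ (α (j k)) = 0
    rw [hαj]
    exact k.2
  obtain ⟨β, hβ⟩ := factor_surj q hq (ρ ∘ₗ α) hker
  obtain ⟨hmap, hhm⟩ := happrox β
  set θ : G →ₗ[Λ] T'' := α - hmap ∘ₗ q with hθ
  have hθmem : ∀ g, θ g ∈ LinearMap.ker ρ := by
    intro g
    have h1 : β (q g) = ρ (α g) := congrArg (fun f => f g) hβ
    have h2 : ρ (hmap (q g)) = β (q g) := congrArg (fun f => f (q g)) hhm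
    have : ρ (θ g) = ρ (α g) - ρ (hmap (q g)) := by
      rw [hθ]
      simp [LinearMap.sub_apply, map_sub]
    rw [LinearMap.mem_ker, this, h2, h1, sub_self]
  refine ⟨codRestrict (LinearMap.ker ρ) θ hθmem, ?_⟩
  apply LinearMap.ext; intro k
  apply Subtype.ext
  show θ (j k) = (k : T'')
  have hstep : θ (j k) = α (j k) - hmap (q (j k)) := rfl
  rw [hstep, hαj, hqj, map_zero, sub_zero]

end Aux5

/-- The minimal right `add T`-approximation of the Bongartz complement `B`
of a rigid module `T` over a hereditary artin algebra is injective. -/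
theorem min_right_approx_of_bongartz_injective (Λ : Type) [Ring Λ] [IsArtinianRing Λ]
    (hH : IsHereditaryRing Λ)
    (T E T' B T'' : Type) [AddCommGroup T] [Module Λ T] [AddCommGroup E] [Module Λ E]
    [AddCommGroup T'] [Module Λ T'] [AddCommGroup B] [Module Λ B]
    [AddCommGroup T''] [Module Λ T'']
    (hTfl : IsFiniteLength Λ T)
    (hrigid : Ext1Zero Λ T T) (hT' : InAdd Λ T T')
    (i : Λ →ₗ[Λ] E) (p : E →ₗ[Λ] T')
    (hi : Function.Injective i) (hp : Function.Surjective p)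
    (hexact : LinearMap.ker p = LinearMap.range i)
    (huniv : ∀ (F : Type) [AddCommGroup F] [Module Λ F] (j : Λ →ₗ[Λ] F) (q : F →ₗ[Λ] T),
      Function.Injective j → Function.Surjective q → LinearMap.ker q = LinearMap.range j →
      ∃ (h : T →ₗ[Λ] T') (φ : F →ₗ[Λ] E), φ ∘ₗ j = i ∧ p ∘ₗ φ = h ∘ₗ q)
    (hB1 : InAdd Λ E B) (hB2 : InAdd Λ (T × B) E)
    (hcop : CoprimeMod Λ T B)
    (hT'' : InAdd Λ T T'') (ρ : T'' →ₗ[Λ] B)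
    (happrox : ∀ g : T →ₗ[Λ] B, ∃ h : T →ₗ[Λ] T'', ρ ∘ₗ h = g)
    (hmin : ∀ θ : T'' →ₗ[Λ] T'', ρ ∘ₗ θ = ρ → Function.Bijective θ) :
    Function.Injective ρ := by
  classical
  have hTT'' : Ext1Zero Λ T T'' := ext1zero_inadd_right hrigid hT''
  have hK_T : Ext1Zero Λ T ↥(LinearMap.ker ρ) := wakamatsu hTT'' ρ happrox
  have hK_T' : Ext1Zero Λ T' ↥(LinearMap.ker ρ) := ext1zero_inadd_left hK_T hT'
  have hK_E : Ext1Zero Λ E ↥(LinearMap.ker ρ) := ext1zero_mid i p hi hp hexact hK_T'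
  have hK_B : Ext1Zero Λ B ↥(LinearMap.ker ρ) := ext1zero_inadd_left hK_E hB1
  have hK_I : Ext1Zero Λ ↥(LinearMap.range ρ) ↥(LinearMap.ker ρ) :=
    ext1zero_sub hH (LinearMap.range ρ).subtype (Submodule.injective_subtype _) hK_B
  have hqIs : Function.Surjective ρ.rangeRestrict := LinearMap.surjective_rangeRestrict ρ
  have hexI : LinearMap.ker ρ.rangeRestrict = LinearMap.range (LinearMap.ker ρ).subtype := by
    rw [LinearMap.ker_rangeRestrict, Submodule.range_subtype]
  obtain ⟨κ, hκ⟩ := hK_I T'' (LinearMap.ker ρ).subtype ρ.rangeRestrict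
    (Submodule.injective_subtype _) hqIs hexI
  set θ : T'' →ₗ[Λ] T'' := LinearMap.id - (LinearMap.ker ρ).subtype ∘ₗ κ with hθ
  have hρθ : ρ ∘ₗ θ = ρ := by
    apply LinearMap.ext; intro x
    have h0 : ρ ((LinearMap.ker ρ).subtype (κ x)) = 0 := (κ x).2
    show ρ (x - (LinearMap.ker ρ).subtype (κ x)) = ρ x
    rw [map_sub, h0, sub_zero]
  have hbij := hmin θ hρθ
  have hker0 : ∀ x : T'', ρ x = 0 → x = 0 := by
    intro x hx
    have hk : x ∈ LinearMap.ker ρ := hx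
    have hκx : κ x = ⟨x, hk⟩ := by
      have := congrArg (fun f => f (⟨x, hk⟩ : ↥(LinearMap.ker ρ))) hκ
      simpa using this
    have hθx : θ x = 0 := by
      show x - (LinearMap.ker ρ).subtype (κ x) = 0
      rw [hκx]
      simp
    have h0 : θ x = θ 0 := by rw [hθx, map_zero]
    exact hbij.1 h0
  intro a b hab
  have h1 : ρ (a - b) = 0 := by rw [map_sub, hab, sub_self]
  exact sub_eq_zero.mp (hker0 _ h1)
end
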